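/- arXiv:1411.0935 — 5 statements merged into one kernel-verified Lean document; each statement's English description precedes it below -/
import Mathlib

section
/- Let G be a d-regular simple graph on N vertices with d > 0, and suppose the smallest eigenvalue of the adjacency matrix of G is −λ. Then i(G) ≤ (Σ_{s=0}^{⌈σN⌉} C(N,s)) · 2^{αN}, where α = λ/(d+λ) and σ = ln(d+1)/(d+λ). -/
open Filter
open scoped symmDiff

variable {α : Type*}

/-- The rank of a matroid: the common cardinality of its bases. -/
noncomputable def Matroid.rnk (M : Matroid α) : ℕ :=
  sSup {k | ∃ B, M.IsBase B ∧ B.ncard = k}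

/-- The rank function of a matroid. -/
noncomputable def Matroid.rkFun (M : Matroid α) (X : Set α) : ℕ :=
  sSup {k | ∃ I, I ⊆ X ∧ M.Indep I ∧ I.ncard = k}

/-- A circuit: a minimal dependent set. -/
def Matroid.IsCircuitSet (M : Matroid α) (C : Set α) : Prop :=
  M.Dep C ∧ ∀ D ⊂ C, M.Indep D

/-- A cocircuit: a circuit of the dual. -/
def Matroid.IsCocircuitSet (M : Matroid α) (D : Set α) : Prop :=
  M✶.IsCircuitSet D

/-- A matroid is paving if every circuit has cardinality at least the rank. -/
def Matroid.Paving (M : Matroid α) : Prop :=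
  ∀ C, M.IsCircuitSet C → M.rnk ≤ C.ncard

/-- Sparse paving: both the matroid and its dual are paving. -/
def Matroid.SparsePaving (M : Matroid α) : Prop :=
  M.Paving ∧ M✶.Paving

/-- A matroid has no loops iff every singleton of the ground set is independent. -/
def Matroid.LoopFree (M : Matroid α) : Prop :=
  ∀ e ∈ M.E, M.Indep {e}

/-- A matroid has no coloops iff its dual has no loops. -/
def Matroid.ColoopFree (M : Matroid α) : Prop :=
  M✶.LoopFree

/-- A flat: a set whose rank increases upon adding any element of the ground set outside it. -/
def Matroid.IsFlatSet (M : Matroid α) (F : Set α) : Prop :=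
  F ⊆ M.E ∧ ∀ e ∈ M.E \ F, M.rkFun F < M.rkFun (F ∪ {e})

/-- The number of matroids on ground set `{1, …, n}`. -/
noncomputable def numMatroids (n : ℕ) : ℕ :=
  Nat.card {M : Matroid (Fin n) // M.E = Set.univ}

/-- The number of sparse paving matroids on ground set `{1, …, n}`. -/
noncomputable def numSparsePaving (n : ℕ) : ℕ :=
  Nat.card {M : Matroid (Fin n) // M.E = Set.univ ∧ M.SparsePaving}

/-- The number of loopless, coloopless matroids on ground set `{1, …, n}`. -/
noncomputable def numMatroidsNoLoopColoop (n : ℕ) : ℕ :=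
  Nat.card {M : Matroid (Fin n) // M.E = Set.univ ∧ M.LoopFree ∧ M.ColoopFree}

/-- Number of rank-`r` loopless, coloopless matroids on `{1, …, n}`. -/
noncomputable def numMatroidsNoLoopColoopRk (n r : ℕ) : ℕ :=
  Nat.card {M : Matroid (Fin n) // M.E = Set.univ ∧ M.rnk = r ∧ M.LoopFree ∧ M.ColoopFree}

/-- Number of rank-`r` sparse paving matroids on `{1, …, n}`. -/
noncomputable def numSparsePavingRk (n r : ℕ) : ℕ :=
  Nat.card {M : Matroid (Fin n) // M.E = Set.univ ∧ M.rnk = r ∧ M.SparsePaving}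

/-- The Johnson graph `J(E, r)` on the `r`-element subsets of a type. -/
def johnsonGraph (α : Type*) [DecidableEq α] (r : ℕ) :
    SimpleGraph {X : Finset α // X.card = r} where
  Adj X Y := (X.1 ∆ Y.1).card = 2
  symm := ⟨by intro X Y h; rwa [symmDiff_comm]⟩
  loopless := ⟨by intro X h; simp [symmDiff_self] at h⟩

/-- A stable (independent) set of vertices in a graph. -/
def SimpleGraph.IsStableSet {V : Type*} (G : SimpleGraph V) (s : Set V) : Prop :=
  ∀ ⦃x⦄, x ∈ s → ∀ ⦃y⦄, y ∈ s → ¬ G.Adj x y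

/-- The number of stable sets of a graph. -/
noncomputable def numStableSets {V : Type*} (G : SimpleGraph V) : ℕ :=
  Nat.card {s : Set V // G.IsStableSet s}


section AuxStable
open Matrix Finset



lemma quadform_ge {V : Type*} [Fintype V] [DecidableEq V] (A : Matrix V V ℝ)
    (hA : A.IsHermitian) (lam : ℝ) (hmin : ∀ μ ∈ spectrum ℝ A, -lam ≤ μ) (x : V → ℝ) :
    -(lam * (x ⬝ᵥ x)) ≤ x ⬝ᵥ (A *ᵥ x) := by
  have hM : (algebraMap ℝ (Matrix V V ℝ) lam + A).IsHermitian := by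
    refine Matrix.IsHermitian.add ?_ hA
    rw [Algebra.algebraMap_eq_smul_one]
    show (lam • (1 : Matrix V V ℝ))ᴴ = _
    rw [Matrix.conjTranspose_smul, Matrix.conjTranspose_one]
    simp
  have hev : ∀ i, 0 ≤ hM.eigenvalues i := by
    intro i
    have h1 := hM.eigenvalues_mem_spectrum_real i
    have h2 : hM.eigenvalues i - lam ∈ spectrum ℝ A := by
      rw [← spectrum.add_mem_add_iff (s := lam) (a := A)]
      simpa using h1
    have := hmin _ h2
    linarith
  have hpsd : (algebraMap ℝ (Matrix V V ℝ) lam + A).PosSemidef :=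
    hM.posSemidef_iff_eigenvalues_nonneg.mpr hev
  have h0 := (Matrix.posSemidef_iff_dotProduct_mulVec.mp hpsd).2 x
  have hst : star x = x := by ext v; simp
  rw [hst] at h0
  have hmv : (algebraMap ℝ (Matrix V V ℝ) lam + A) *ᵥ x = lam • x + A *ᵥ x := by
    rw [Matrix.add_mulVec]
    congr 1
    rw [Algebra.algebraMap_eq_smul_one, Matrix.smul_mulVec, Matrix.one_mulVec]
  rw [hmv, dotProduct_add, dotProduct_smul] at h0
  have h3 : lam • (x ⬝ᵥ x) = lam * (x ⬝ᵥ x) := rfl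
  linarith [h0]

lemma adj_hermitian {V : Type*} [Fintype V] [DecidableEq V] (G : SimpleGraph V)
    [DecidableRel G.Adj] : (G.adjMatrix ℝ).IsHermitian := by
  show (G.adjMatrix ℝ)ᴴ = _
  ext i j
  simp [Matrix.conjTranspose_apply, SimpleGraph.adjMatrix_apply, G.adj_comm i j]

lemma lam_ge_one {V : Type*} [Fintype V] [DecidableEq V] (G : SimpleGraph V)
    [DecidableRel G.Adj] [Nonempty V] (d : ℕ) (hreg : G.IsRegularOfDegree d) (hd : 0 < d)
    (lam : ℝ) (hmin : ∀ μ ∈ spectrum ℝ (G.adjMatrix ℝ), -lam ≤ μ) : 1 ≤ lam := by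
  obtain ⟨v⟩ := ‹Nonempty V›
  have hdeg : (G.neighborFinset v).Nonempty := by
    rw [← Finset.card_pos, ← SimpleGraph.degree, hreg v]  -- may fail; fix below
    exact hd
  obtain ⟨w, hw⟩ := hdeg
  have hadj : G.Adj v w := (SimpleGraph.mem_neighborFinset G v w).mp hw
  have hvw : v ≠ w := G.ne_of_adj hadj
  set x : V → ℝ := fun y => (if y = v then (1:ℝ) else 0) - (if y = w then (1:ℝ) else 0) with hx
  have hxx : x ⬝ᵥ x = 2 := by
    unfold dotProduct
    have key : ∀ y, x y * x y = (if y = v then (1:ℝ) else 0) + (if y = w then (1:ℝ) else 0) := by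
      intro y
      simp only [hx]
      rcases eq_or_ne y v with rfl | h1
      · rcases eq_or_ne y w with rfl | h2
        · exact absurd rfl hvw
        · simp [h2]
      · rcases eq_or_ne y w with rfl | h2
        · simp [h1]
        · simp [h1, h2]
    rw [Finset.sum_congr rfl fun y _ => key y, Finset.sum_add_distrib]
    rw [Finset.sum_ite_eq' Finset.univ v (fun _ => (1:ℝ)), Finset.sum_ite_eq' Finset.univ w (fun _ => (1:ℝ))]
    simp
    norm_num
  have hmv : ∀ y, ((G.adjMatrix ℝ) *ᵥ x) y
      = (if v ∈ G.neighborFinset y then (1:ℝ) else 0)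
        - (if w ∈ G.neighborFinset y then (1:ℝ) else 0) := by
    intro y
    rw [SimpleGraph.adjMatrix_mulVec_apply]
    simp only [hx]
    rw [Finset.sum_sub_distrib]
    rw [Finset.sum_ite_eq' (G.neighborFinset y) v (fun _ => (1:ℝ)),
      Finset.sum_ite_eq' (G.neighborFinset y) w (fun _ => (1:ℝ))]
  have hxAx : x ⬝ᵥ ((G.adjMatrix ℝ) *ᵥ x) = -2 := by
    unfold dotProduct
    have : ∀ y, x y * ((G.adjMatrix ℝ) *ᵥ x) y
        = (if y = v then (1:ℝ) else 0) * ((G.adjMatrix ℝ) *ᵥ x) y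
          - (if y = w then (1:ℝ) else 0) * ((G.adjMatrix ℝ) *ᵥ x) y := by
      intro y; simp only [hx]; ring
    rw [Finset.sum_congr rfl fun y _ => this y, Finset.sum_sub_distrib]
    simp only [ite_mul, one_mul, zero_mul]
    rw [Finset.sum_ite_eq' Finset.univ v, Finset.sum_ite_eq' Finset.univ w]
    simp only [Finset.mem_univ, if_true]
    rw [hmv v, hmv w]
    have h1 : v ∉ G.neighborFinset v := by simp
    have h2 : w ∈ G.neighborFinset v := hw
    have h3 : v ∈ G.neighborFinset w := by
      rw [SimpleGraph.mem_neighborFinset]; exact hadj.symm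
    have h4 : w ∉ G.neighborFinset w := by simp
    simp [h1, h2, h3, h4]
    norm_num
  have := quadform_ge (G.adjMatrix ℝ) (adj_hermitian G) lam hmin x
  rw [hxx, hxAx] at this
  linarith


lemma edge_bound {V : Type*} [Fintype V] [DecidableEq V] (G : SimpleGraph V)
    [DecidableRel G.Adj] [Nonempty V] (d : ℕ) (hreg : G.IsRegularOfDegree d) (lam : ℝ)
    (hmin : ∀ μ ∈ spectrum ℝ (G.adjMatrix ℝ), -lam ≤ μ) (C : Finset V) :
    ((d:ℝ)+lam) * C.card^2 / (Fintype.card V) - lam * C.card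
      ≤ ∑ v ∈ C, ((C.filter (G.Adj v)).card : ℝ) := by
  set N : ℝ := (Fintype.card V : ℝ) with hN
  have hN0 : 0 < N := by positivity
  set c : ℝ := (C.card : ℝ) with hc
  set x : V → ℝ := fun v => (if v ∈ C then (1:ℝ) else 0) - c/N with hx
  have hA : (G.adjMatrix ℝ).IsHermitian := by
    show (G.adjMatrix ℝ)ᴴ = _
    ext i j
    simp [Matrix.conjTranspose_apply, SimpleGraph.adjMatrix_apply, G.adj_comm i j]
  have hchi : ∀ (s : Finset V), ∑ u ∈ s, (if u ∈ C then (1:ℝ) else 0) = ((s ∩ C).card : ℝ) := by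
    intro s
    rw [Finset.sum_ite_mem]
    simp
  have hdeg : ∀ v : V, ((G.neighborFinset v).card : ℝ) = (d : ℝ) := by
    intro v; exact_mod_cast hreg v
  have hfilter : ∀ v : V, (G.neighborFinset v) ∩ C = C.filter (G.Adj v) := by
    intro v; ext u; simp [SimpleGraph.mem_neighborFinset, and_comm]
  have hmv : ∀ v : V, ((G.adjMatrix ℝ) *ᵥ x) v = ((C.filter (G.Adj v)).card : ℝ) - d * c / N := by
    intro v
    rw [SimpleGraph.adjMatrix_mulVec_apply]
    simp only [hx]
    rw [Finset.sum_sub_distrib, hchi, hfilter, Finset.sum_const, nsmul_eq_mul, hdeg]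
    ring
  have hcardfilter : ∀ (p : V → Prop) (s : Finset V) (_ : DecidablePred p),
      ((s.filter p).card : ℝ) = ∑ u ∈ s, (if p u then (1:ℝ) else 0) := by
    intro p s hp
    rw [Finset.card_filter]
    push_cast
    rfl
  have hS : ∑ v, ((C.filter (G.Adj v)).card : ℝ) = d * c := by
    calc ∑ v, ((C.filter (G.Adj v)).card : ℝ)
        = ∑ v, ∑ u ∈ C, (if G.Adj v u then (1:ℝ) else 0) := by
          refine Finset.sum_congr rfl fun v _ => hcardfilter _ _ _
      _ = ∑ u ∈ C, ∑ v, (if G.Adj v u then (1:ℝ) else 0) := Finset.sum_comm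
      _ = ∑ u ∈ C, ((Finset.univ.filter (fun v => G.Adj v u)).card : ℝ) := by
          refine Finset.sum_congr rfl fun u _ => (hcardfilter _ _ _).symm
      _ = ∑ u ∈ C, (d:ℝ) := by
          refine Finset.sum_congr rfl fun u _ => ?_
          have : Finset.univ.filter (fun v => G.Adj v u) = G.neighborFinset u := by
            ext v; simp [SimpleGraph.mem_neighborFinset, G.adj_comm]
          rw [this, hdeg]
      _ = d * c := by rw [Finset.sum_const]; simp [hc]; ring
  -- sum of x
  have hxsum : ∑ v, x v = 0 := by
    simp only [hx]
    rw [Finset.sum_sub_distrib, hchi, Finset.sum_const, nsmul_eq_mul]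
    simp only [Finset.univ_inter]
    field_simp
    rw [Finset.card_univ, ← hN, hc]; ring
  -- the quadratic form value
  set S : ℝ := ∑ v ∈ C, ((C.filter (G.Adj v)).card : ℝ) with hSdef
  have hquad : x ⬝ᵥ ((G.adjMatrix ℝ) *ᵥ x) = S - d * c^2 / N := by
    unfold dotProduct
    calc ∑ v, x v * ((G.adjMatrix ℝ) *ᵥ x) v
        = ∑ v, (x v * ((C.filter (G.Adj v)).card : ℝ) - x v * (d * c / N)) := by
          refine Finset.sum_congr rfl fun v _ => by rw [hmv]; ring
      _ = ∑ v, x v * ((C.filter (G.Adj v)).card : ℝ) - (∑ v, x v) * (d * c / N) := by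
          rw [Finset.sum_sub_distrib, ← Finset.sum_mul]
      _ = ∑ v, x v * ((C.filter (G.Adj v)).card : ℝ) := by rw [hxsum]; ring
      _ = ∑ v, ((if v ∈ C then (1:ℝ) else 0) * ((C.filter (G.Adj v)).card : ℝ))
            - (c/N) * ∑ v, ((C.filter (G.Adj v)).card : ℝ) := by
          simp only [hx]
          rw [Finset.mul_sum, ← Finset.sum_sub_distrib]
          refine Finset.sum_congr rfl fun v _ => by ring
      _ = S - d * c^2 / N := by
          rw [hS]
          congr 1
          · rw [hSdef]
            simp only [ite_mul, one_mul, zero_mul]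
            rw [Finset.sum_ite_mem, Finset.univ_inter]
          · ring
  -- norm of x
  have hnorm : x ⬝ᵥ x = c - c^2 / N := by
    unfold dotProduct
    have : ∀ v, x v * x v = (if v ∈ C then (1:ℝ) else 0) - 2*(c/N)*(if v ∈ C then (1:ℝ) else 0)
        + (c/N)^2 := by
      intro v
      simp only [hx]
      by_cases h : v ∈ C <;> simp [h] <;> ring
    rw [Finset.sum_congr rfl fun v _ => this v]
    rw [Finset.sum_add_distrib, Finset.sum_sub_distrib, hchi, ← Finset.mul_sum, hchi,
      Finset.sum_const, nsmul_eq_mul]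
    simp only [Finset.univ_inter, ← hc, ← hN]
    field_simp
    rw [Finset.card_univ, ← hN]
    ring
  have hq := quadform_ge (G.adjMatrix ℝ) hA lam hmin x
  rw [hquad, hnorm] at hq
  have h2 : S ≥ d * c^2/N - lam * (c - c^2/N) := by linarith
  rw [hSdef] at h2
  have hNe : N ≠ 0 := ne_of_gt hN0
  calc ((d:ℝ)+lam) * C.card^2 / (Fintype.card V) - lam * C.card
      = d * c^2/N - lam * (c - c^2/N) := by rw [← hc, ← hN]; field_simp; ring
    _ ≤ ∑ v ∈ C, ((C.filter (G.Adj v)).card : ℝ) := h2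

lemma maxdeg_bound {V : Type*} [Fintype V] [DecidableEq V] (G : SimpleGraph V)
    [DecidableRel G.Adj] [Nonempty V] (d : ℕ) (hreg : G.IsRegularOfDegree d) (lam : ℝ)
    (hmin : ∀ μ ∈ spectrum ℝ (G.adjMatrix ℝ), -lam ≤ μ) (C : Finset V)
    (u : V) (hu : u ∈ C) (hmax : ∀ a ∈ C, (C.filter (G.Adj a)).card ≤ (C.filter (G.Adj u)).card) :
    ((d:ℝ)+lam) * C.card / (Fintype.card V) - lam ≤ ((C.filter (G.Adj u)).card : ℝ) := by
  have hne : C.Nonempty := ⟨u, hu⟩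
  have hc0 : (0:ℝ) < (C.card : ℝ) := by exact_mod_cast Finset.card_pos.mpr hne
  have hsum : ∑ v ∈ C, ((C.filter (G.Adj v)).card : ℝ)
      ≤ (C.card : ℝ) * ((C.filter (G.Adj u)).card : ℝ) := by
    calc ∑ v ∈ C, ((C.filter (G.Adj v)).card : ℝ)
        ≤ ∑ _v ∈ C, ((C.filter (G.Adj u)).card : ℝ) :=
          Finset.sum_le_sum fun v hv => by exact_mod_cast hmax v hv
      _ = (C.card : ℝ) * ((C.filter (G.Adj u)).card : ℝ) := by
          rw [Finset.sum_const, nsmul_eq_mul]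
  have hedge := edge_bound G d hreg lam hmin C
  have hN0 : (0:ℝ) < (Fintype.card V : ℝ) := by
    have : 0 < Fintype.card V := Fintype.card_pos
    exact_mod_cast this
  have h2 : ((d:ℝ)+lam) * C.card^2 / (Fintype.card V) - lam * C.card
      = ((((d:ℝ)+lam) * C.card / (Fintype.card V)) - lam) * C.card := by
    field_simp
  rw [h2] at hedge
  have h3 := le_trans hedge hsum
  rw [mul_comm ((C.card:ℝ))] at h3
  exact le_of_mul_le_mul_right h3 hc0

end AuxStable

section RunProc
open Finset


variable {V : Type*} [Fintype V] [DecidableEq V]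

/-- canonical max-degree-in-C vertex -/
noncomputable def pickv (G : SimpleGraph V) [DecidableRel G.Adj] (C : Finset V)
    (h : C.Nonempty) : V :=
  (Finset.exists_max_image C (fun u => (C.filter (G.Adj u)).card) h).choose

lemma pickv_mem (G : SimpleGraph V) [DecidableRel G.Adj] (C : Finset V) (h : C.Nonempty) :
    pickv G C h ∈ C :=
  (Finset.exists_max_image C (fun u => (C.filter (G.Adj u)).card) h).choose_spec.1

lemma pickv_max (G : SimpleGraph V) [DecidableRel G.Adj] (C : Finset V) (h : C.Nonempty) :
    ∀ a ∈ C, (C.filter (G.Adj a)).card ≤ (C.filter (G.Adj (pickv G C h))).card :=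
  (Finset.exists_max_image C (fun u => (C.filter (G.Adj u)).card) h).choose_spec.2

open scoped Classical in
/-- the container process -/
noncomputable def runP (G : SimpleGraph V) [DecidableRel G.Adj] (m : ℕ) (I : Set V)
    (C : Finset V) : Finset V × Finset V :=
  if h : C.card ≤ m then (∅, C)
  else
    have hne : C.Nonempty := Finset.card_pos.mp (by omega)
    let u := pickv G C hne
    have hu : u ∈ C := pickv_mem G C hne
    if u ∈ I then
      have : (C.filter (fun v => v ≠ u ∧ ¬ G.Adj u v)).card < C.card :=
        Finset.card_lt_card (Finset.ssubset_iff_of_subset (Finset.filter_subset _ _)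
          |>.mpr ⟨u, hu, by simp⟩)
      let p := runP G m I (C.filter (fun v => v ≠ u ∧ ¬ G.Adj u v))
      (insert u p.1, p.2)
    else
      have : (C.erase u).card < C.card := Finset.card_erase_lt_of_mem hu
      runP G m I (C.erase u)
termination_by C.card

variable (G : SimpleGraph V) [DecidableRel G.Adj] (m : ℕ)

lemma runP_le {I : Set V} {C : Finset V} (h : C.card ≤ m) : runP G m I C = (∅, C) := by
  rw [runP]; simp [h]

lemma runP_yes {I : Set V} {C : Finset V} (h : ¬ C.card ≤ m)
    (hne : C.Nonempty) (hin : pickv G C hne ∈ I) :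
    runP G m I C = (insert (pickv G C hne)
        (runP G m I (C.filter (fun v => v ≠ pickv G C hne ∧ ¬ G.Adj (pickv G C hne) v))).1,
      (runP G m I (C.filter (fun v => v ≠ pickv G C hne ∧ ¬ G.Adj (pickv G C hne) v))).2) := by
  rw [runP]
  simp only [h, dite_false]
  rw [if_pos]
  exact hin

lemma runP_no {I : Set V} {C : Finset V} (h : ¬ C.card ≤ m)
    (hne : C.Nonempty) (hin : pickv G C hne ∉ I) :
    runP G m I C = runP G m I (C.erase (pickv G C hne)) := by
  rw [runP]
  simp only [h, dite_false]
  rw [if_neg]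
  exact hin

lemma runP_fst_subset (I : Set V) (C : Finset V) : (runP G m I C).1 ⊆ C := by
  induction C using Finset.strongInduction with
  | _ C ih =>
    by_cases h : C.card ≤ m
    · rw [runP_le G m h]; simp
    · have hne : C.Nonempty := Finset.card_pos.mp (by omega)
      by_cases hin : pickv G C hne ∈ I
      · rw [runP_yes G m h hne hin]
        intro v hv
        rcases Finset.mem_insert.mp hv with rfl | hv
        · exact pickv_mem G C hne
        · exact Finset.filter_subset _ _ (ih _ (Finset.filter_ssubset.mpr
            ⟨_, pickv_mem G C hne, by simp⟩) hv)
      · rw [runP_no G m h hne hin]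
        exact (ih _ (Finset.erase_ssubset (pickv_mem G C hne))).trans
          (Finset.erase_subset _ _)

lemma runP_snd_subset (I : Set V) (C : Finset V) : (runP G m I C).2 ⊆ C := by
  induction C using Finset.strongInduction with
  | _ C ih =>
    by_cases h : C.card ≤ m
    · rw [runP_le G m h]
    · have hne : C.Nonempty := Finset.card_pos.mp (by omega)
      by_cases hin : pickv G C hne ∈ I
      · rw [runP_yes G m h hne hin]
        exact (ih _ (Finset.filter_ssubset.mpr ⟨_, pickv_mem G C hne, by simp⟩)).trans
          (Finset.filter_subset _ _)
      · rw [runP_no G m h hne hin]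
        exact (ih _ (Finset.erase_ssubset (pickv_mem G C hne))).trans
          (Finset.erase_subset _ _)

lemma runP_snd_card (I : Set V) (C : Finset V) : (runP G m I C).2.card ≤ m := by
  induction C using Finset.strongInduction with
  | _ C ih =>
    by_cases h : C.card ≤ m
    · rw [runP_le G m h]; exact h
    · have hne : C.Nonempty := Finset.card_pos.mp (by omega)
      by_cases hin : pickv G C hne ∈ I
      · rw [runP_yes G m h hne hin]
        exact ih _ (Finset.filter_ssubset.mpr ⟨_, pickv_mem G C hne, by simp⟩)
      · rw [runP_no G m h hne hin]
        exact ih _ (Finset.erase_ssubset (pickv_mem G C hne))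

lemma runP_fst_mem (I : Set V) (C : Finset V) : ↑(runP G m I C).1 ⊆ I := by
  induction C using Finset.strongInduction with
  | _ C ih =>
    by_cases h : C.card ≤ m
    · rw [runP_le G m h]; simp
    · have hne : C.Nonempty := Finset.card_pos.mp (by omega)
      by_cases hin : pickv G C hne ∈ I
      · rw [runP_yes G m h hne hin]
        intro v hv
        simp only [Finset.coe_insert, Set.mem_insert_iff] at hv
        rcases hv with rfl | hv
        · exact hin
        · exact ih _ (Finset.filter_ssubset.mpr ⟨_, pickv_mem G C hne, by simp⟩) hv
      · rw [runP_no G m h hne hin]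
        exact ih _ (Finset.erase_ssubset (pickv_mem G C hne))

lemma runP_cover {I : Set V} (hI : G.IsStableSet I) (C : Finset V) :
    I ∩ ↑C ⊆ ↑(runP G m I C).1 ∪ ↑(runP G m I C).2 := by
  induction C using Finset.strongInduction with
  | _ C ih =>
    by_cases h : C.card ≤ m
    · rw [runP_le G m h]; intro v hv; exact Or.inr hv.2
    · have hne : C.Nonempty := Finset.card_pos.mp (by omega)
      by_cases hin : pickv G C hne ∈ I
      · rw [runP_yes G m h hne hin]
        rintro v ⟨hvI, hvC⟩
        by_cases hv : v = pickv G C hne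
        · subst hv; left; simp
        · have hadj : ¬ G.Adj (pickv G C hne) v := hI hin hvI
          have : v ∈ I ∩ ↑(C.filter (fun v => v ≠ pickv G C hne ∧ ¬ G.Adj (pickv G C hne) v)) := by
            refine ⟨hvI, ?_⟩
            simp only [Finset.coe_filter, Set.mem_setOf_eq]
            exact ⟨hvC, hv, hadj⟩
          rcases ih _ (Finset.filter_ssubset.mpr ⟨_, pickv_mem G C hne, by simp⟩) this with h1 | h1
          · left; simp only [Finset.coe_insert, Set.mem_insert_iff]; right; exact h1
          · right; exact h1
      · rw [runP_no G m h hne hin]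
        rintro v ⟨hvI, hvC⟩
        have hv : v ≠ pickv G C hne := by rintro rfl; exact hin hvI
        exact ih _ (Finset.erase_ssubset (pickv_mem G C hne))
          ⟨hvI, Finset.mem_coe.mpr (Finset.mem_erase.mpr ⟨hv, hvC⟩)⟩

lemma runP_congr {I I' : Set V} (C : Finset V) (hag : I ∩ ↑C = I' ∩ ↑C) :
    runP G m I C = runP G m I' C := by
  induction C using Finset.strongInduction with
  | _ C ih =>
    by_cases h : C.card ≤ m
    · rw [runP_le G m h, runP_le G m h]
    · have hne : C.Nonempty := Finset.card_pos.mp (by omega)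
      have hmemiff : ∀ v ∈ C, (v ∈ I ↔ v ∈ I') := by
        intro v hv
        have := Set.ext_iff.mp hag v
        simp only [Set.mem_inter_iff, Finset.mem_coe] at this
        constructor
        · intro hvI; exact (this.mp ⟨hvI, hv⟩).1
        · intro hvI'; exact (this.mpr ⟨hvI', hv⟩).1
      have key : ∀ D : Finset V, D ⊆ C → I ∩ ↑D = I' ∩ ↑D := by
        intro D hD
        ext v
        simp only [Set.mem_inter_iff, Finset.mem_coe]
        constructor
        · rintro ⟨h1, h2⟩; exact ⟨(hmemiff v (hD h2)).mp h1, h2⟩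
        · rintro ⟨h1, h2⟩; exact ⟨(hmemiff v (hD h2)).mpr h1, h2⟩
      by_cases hin : pickv G C hne ∈ I
      · have hin' : pickv G C hne ∈ I' := (hmemiff _ (pickv_mem G C hne)).mp hin
        rw [runP_yes G m h hne hin, runP_yes G m h hne hin']
        have := ih (C.filter (fun v => v ≠ pickv G C hne ∧ ¬ G.Adj (pickv G C hne) v))
          (Finset.filter_ssubset.mpr ⟨_, pickv_mem G C hne, fun hcon => hcon.1 rfl⟩)
          (key _ (Finset.filter_subset _ _))
        rw [this]
      · have hin' : pickv G C hne ∉ I' := fun hc => hin ((hmemiff _ (pickv_mem G C hne)).mpr hc)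
        rw [runP_no G m h hne hin, runP_no G m h hne hin']
        exact ih _ (Finset.erase_ssubset (pickv_mem G C hne))
          (key _ (Finset.erase_subset _ _))

lemma runP_idem (I : Set V) (C : Finset V) :
    runP G m (↑(runP G m I C).1) C = runP G m I C := by
  induction C using Finset.strongInduction with
  | _ C ih =>
    by_cases h : C.card ≤ m
    · rw [runP_le G m h]
      rw [runP_le G m h]
    · have hne : C.Nonempty := Finset.card_pos.mp (by omega)
      set u := pickv G C hne with hu
      by_cases hin : u ∈ I
      · rw [runP_yes G m h hne hin]
        set C' := C.filter (fun v => v ≠ u ∧ ¬ G.Adj u v) with hC'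
        set p := runP G m I C' with hp
        have hssub : C' ⊂ C :=
          Finset.filter_ssubset.mpr ⟨u, pickv_mem G C hne, fun hcon => hcon.1 rfl⟩
        have huO : u ∈ (↑(insert u p.1) : Set V) := by simp
        rw [runP_yes G m h hne huO]
        have hagree : (↑(insert u p.1) : Set V) ∩ ↑C' = (↑p.1 : Set V) ∩ ↑C' := by
          ext v
          simp only [Set.mem_inter_iff, Finset.coe_insert, Set.mem_insert_iff, Finset.mem_coe]
          constructor
          · rintro ⟨rfl | h1, h2⟩
            · exact absurd ((Finset.mem_filter.mp h2).2.1 rfl) not_false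
            · exact ⟨h1, h2⟩
          · rintro ⟨h1, h2⟩; exact ⟨Or.inr h1, h2⟩
        have : runP G m (↑(insert u p.1)) C' = p := by
          rw [runP_congr G m C' hagree]
          exact ih C' hssub
        rw [this]
      · rw [runP_no G m h hne hin]
        set p := runP G m I (C.erase u) with hp
        have husub : p.1 ⊆ C.erase u := runP_fst_subset G m I (C.erase u)
        have huO : u ∉ (↑p.1 : Set V) := by
          intro hc
          exact (Finset.mem_erase.mp (husub hc)).1 rfl
        rw [runP_no G m h hne huO]
        exact ih _ (Finset.erase_ssubset (pickv_mem G C hne))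

lemma runP_fst_card (q lam mr ρ a : ℝ) (hρ0 : 0 ≤ ρ)
    (hcontr : ∀ c : ℝ, (m:ℝ) + 1 ≤ c → (1 - q) * c + lam - 1 ≤ ρ * (c - mr) + mr)
    (hstep : ∀ (C : Finset V) (hne : C.Nonempty),
      q * C.card - lam ≤ ((C.filter (G.Adj (pickv G C hne))).card : ℝ))
    (ha : a < (m:ℝ) + 1) :
    ∀ (k : ℕ) (C : Finset V) (I : Set V),
      ρ ^ k * ((C.card : ℝ) - mr) ≤ a - mr → (runP G m I C).1.card ≤ k := by
  intro k C
  induction C using Finset.strongInduction generalizing k with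
  | _ C ih =>
    intro I hk
    by_cases h : C.card ≤ m
    · rw [runP_le G m h]; simp
    · have hne : C.Nonempty := Finset.card_pos.mp (by omega)
      have hCm : (m:ℝ) + 1 ≤ (C.card : ℝ) := by
        have : m + 1 ≤ C.card := by omega
        exact_mod_cast this
      cases k with
      | zero =>
        exfalso
        rw [pow_zero, one_mul] at hk
        have : (C.card : ℝ) ≤ a := by linarith
        linarith
      | succ k =>
        set u := pickv G C hne with hu
        by_cases hin : u ∈ I
        · rw [runP_yes G m h hne hin]
          set C' := C.filter (fun v => v ≠ u ∧ ¬ G.Adj u v) with hC'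
          have hssub : C' ⊂ C :=
            Finset.filter_ssubset.mpr ⟨u, pickv_mem G C hne, fun hcon => hcon.1 rfl⟩
          -- cardinality of C'
          have hsplit : C' = C \ insert u (C.filter (G.Adj u)) := by
            ext v
            simp only [hC', Finset.mem_filter, Finset.mem_sdiff, Finset.mem_insert]
            tauto
          have hsub2 : insert u (C.filter (G.Adj u)) ⊆ C := by
            intro v hv
            rcases Finset.mem_insert.mp hv with rfl | hv
            · exact pickv_mem G C hne
            · exact Finset.filter_subset _ _ hv
          have hunotmem : u ∉ C.filter (G.Adj u) := by
            simp [SimpleGraph.irrefl]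
          have hcard' : (C'.card : ℝ) = (C.card : ℝ) - 1 - ((C.filter (G.Adj u)).card : ℝ) := by
            rw [hsplit, Finset.card_sdiff_of_subset hsub2, Finset.card_insert_of_notMem hunotmem]
            have hle : (C.filter (G.Adj u)).card + 1 ≤ C.card := by
              have := Finset.card_le_card hsub2
              rw [Finset.card_insert_of_notMem hunotmem] at this
              omega
            push_cast [Nat.cast_sub (by omega : (C.filter (G.Adj u)).card + 1 ≤ C.card)]
            ring
          have hdegb := hstep C hne
          have hstep1 : (C'.card : ℝ) - mr ≤ ρ * ((C.card : ℝ) - mr) := by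
            have h1 : (C'.card : ℝ) ≤ (1 - q) * (C.card : ℝ) + lam - 1 := by
              rw [hcard']
              have := hdegb
              nlinarith [this]
            have h2 := hcontr (C.card : ℝ) hCm
            linarith
          have hk' : ρ ^ k * ((C'.card : ℝ) - mr) ≤ a - mr := by
            calc ρ ^ k * ((C'.card : ℝ) - mr) ≤ ρ ^ k * (ρ * ((C.card : ℝ) - mr)) := by
                  exact mul_le_mul_of_nonneg_left hstep1 (pow_nonneg hρ0 k)
              _ = ρ ^ (k+1) * ((C.card : ℝ) - mr) := by ring
              _ ≤ a - mr := hk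
          have := ih C' hssub k I hk'
          calc (insert u (runP G m I C').1).card ≤ (runP G m I C').1.card + 1 :=
                Finset.card_insert_le _ _
            _ ≤ k + 1 := by omega
        · rw [runP_no G m h hne hin]
          refine ih _ (Finset.erase_ssubset (pickv_mem G C hne)) (k+1) I ?_
          refine le_trans (mul_le_mul_of_nonneg_left ?_ (pow_nonneg hρ0 (k+1))) hk
          have : ((C.erase u).card : ℝ) ≤ (C.card : ℝ) := by
            exact_mod_cast Finset.card_le_card (Finset.erase_subset _ _)
          linarith

lemma card_subsets (F : Finset V) : Nat.card {S : Set V // S ⊆ ↑F} = 2 ^ F.card := by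
  classical
  have e1 : {s : Finset V // s ∈ F.powerset} ≃ {S : Set V // S ⊆ ↑F} :=
    { toFun := fun s => ⟨↑s.1, Finset.coe_subset.mpr (Finset.mem_powerset.mp s.2)⟩
      invFun := fun S => ⟨S.1.toFinset, Finset.mem_powerset.mpr (by
        have := S.2
        intro x hx
        exact Finset.mem_coe.mp (this (Set.mem_toFinset.mp hx)))⟩
      left_inv := fun s => by
        ext x
        simp
      right_inv := fun S => by
        ext x
        simp }
  rw [← Nat.card_congr e1, Nat.card_eq_fintype_card, Fintype.card_coe, Finset.card_powerset]

lemma card_small_finsets (t : ℕ) :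
    Fintype.card {J : Finset V // J.card ≤ t}
      = ∑ s ∈ Finset.range (t+1), (Fintype.card V).choose s := by
  classical
  rw [Fintype.card_subtype]
  have h1 : (Finset.univ.filter fun (J : Finset V) => J.card ≤ t)
      = (Finset.range (t+1)).biUnion (fun s => Finset.powersetCard s Finset.univ) := by
    ext J
    simp only [Finset.mem_filter, Finset.mem_univ, true_and, Finset.mem_biUnion,
      Finset.mem_range, Finset.mem_powersetCard, Nat.lt_succ_iff]
    constructor
    · intro h; exact ⟨J.card, h, Finset.subset_univ _, rfl⟩
    · rintro ⟨s, hs, -, rfl⟩; exact hs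
  rw [h1, Finset.card_biUnion]
  · refine Finset.sum_congr rfl fun s _ => ?_
    rw [Finset.card_powersetCard, Finset.card_univ]
  · intro s _ s' _ hss
    simp only [Finset.disjoint_left, Finset.mem_powersetCard]
    rintro J ⟨-, rfl⟩ ⟨-, hc⟩
    exact hss hc

lemma count_main (t : ℕ)
    (hJ : ∀ I : Set V, G.IsStableSet I → (runP G m I Finset.univ).1.card ≤ t) :
    numStableSets G ≤ (∑ s ∈ Finset.range (t+1), (Fintype.card V).choose s) * 2 ^ m := by
  classical
  set T := {p : Finset V × Set V // p.1.card ≤ t ∧ p.2 ⊆ ↑((runP G m (↑p.1) Finset.univ).2)}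
    with hT
  have hrecon : ∀ (I : Set V), G.IsStableSet I →
      I = ↑(runP G m I Finset.univ).1 ∪ (I ∩ ↑(runP G m I Finset.univ).2) := by
    intro I hI
    apply Set.Subset.antisymm
    · intro v hv
      have hv2 : v ∈ I ∩ ↑(Finset.univ : Finset V) := ⟨hv, by simp⟩
      rcases runP_cover G m hI Finset.univ hv2 with h1 | h1
      · exact Or.inl h1
      · exact Or.inr ⟨hv, h1⟩
    · rintro v (hv | hv)
      · exact runP_fst_mem G m I Finset.univ hv
      · exact hv.1
  have h1 : numStableSets G ≤ Nat.card T := by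
    rw [numStableSets]
    apply Nat.card_le_card_of_injective
      (fun I : {s : Set V // G.IsStableSet s} =>
        (⟨((runP G m I.1 Finset.univ).1, I.1 ∩ ↑(runP G m I.1 Finset.univ).2),
          hJ I.1 I.2, by rw [runP_idem]; exact Set.inter_subset_right⟩ : T))
    rintro ⟨I, hI⟩ ⟨I', hI'⟩ heq
    have heq2 := congrArg Subtype.val heq
    simp only at heq2
    rw [Prod.mk.injEq] at heq2
    obtain ⟨e1, e2⟩ := heq2
    apply Subtype.ext
    show I = I'
    rw [hrecon I hI, hrecon I' hI', e1, e2]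
  have h2 : Nat.card T ≤ Nat.card ((J : {J : Finset V // J.card ≤ t}) ×
      {S : Set V // S ⊆ ↑((runP G m (↑J.1 : Set V) Finset.univ).2)}) := by
    apply Nat.card_le_card_of_injective
      (fun p : T => (⟨⟨p.1.1, p.2.1⟩, ⟨p.1.2, p.2.2⟩⟩ :
        (J : {J : Finset V // J.card ≤ t}) ×
          {S : Set V // S ⊆ ↑((runP G m (↑J.1 : Set V) Finset.univ).2)}))
    rintro ⟨⟨J, S⟩, hp1, hp2⟩ ⟨⟨J', S'⟩, hp1', hp2'⟩ heq
    obtain ⟨hf, hs⟩ := Sigma.ext_iff.mp heq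
    simp only at hf hs
    have hJJ : J = J' := congrArg Subtype.val hf
    subst hJJ
    have hS2 : S = S' := congrArg Subtype.val (eq_of_heq hs)
    apply Subtype.ext
    show (J, S) = (J, S')
    rw [hS2]
  have h3 : Nat.card ((J : {J : Finset V // J.card ≤ t}) ×
      {S : Set V // S ⊆ ↑((runP G m (↑J.1 : Set V) Finset.univ).2)})
      = ∑ J : {J : Finset V // J.card ≤ t},
        Nat.card {S : Set V // S ⊆ ↑((runP G m (↑J.1 : Set V) Finset.univ).2)} := by
    letI : ∀ J : {J : Finset V // J.card ≤ t},
        Fintype {S : Set V // S ⊆ ↑((runP G m (↑J.1 : Set V) Finset.univ).2)} :=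
      fun J => Fintype.ofFinite _
    rw [Nat.card_eq_fintype_card, Fintype.card_sigma]
    exact Finset.sum_congr rfl fun J _ => (Nat.card_eq_fintype_card).symm
  have h4 : ∀ J : {J : Finset V // J.card ≤ t},
      Nat.card {S : Set V // S ⊆ ↑((runP G m (↑J.1 : Set V) Finset.univ).2)} ≤ 2 ^ m := by
    intro J
    rw [card_subsets]
    exact Nat.pow_le_pow_right (by norm_num) (runP_snd_card G m _ _)
  calc numStableSets G ≤ ∑ J : {J : Finset V // J.card ≤ t},
        Nat.card {S : Set V // S ⊆ ↑((runP G m (↑J.1 : Set V) Finset.univ).2)} :=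
        le_trans h1 (le_trans h2 (le_of_eq h3))
    _ ≤ ∑ _J : {J : Finset V // J.card ≤ t}, 2 ^ m := Finset.sum_le_sum fun J _ => h4 J
    _ = Fintype.card {J : Finset V // J.card ≤ t} * 2 ^ m := by
        rw [Finset.sum_const, Finset.card_univ, smul_eq_mul]
    _ = (∑ s ∈ Finset.range (t+1), (Fintype.card V).choose s) * 2 ^ m := by
        rw [card_small_finsets]

end RunProc

/-- the bound on the number of stable sets in a `d`-regular graph with
smallest adjacency eigenvalue `−λ`:
`i(G) ≤ (Σ_{s=0}^{⌈σN⌉} C(N,s)) · 2^{αN}`, `α = λ/(d+λ)`, `σ = ln(d+1)/(d+λ)`. -/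
theorem count_stableSets_regular_graph {V : Type*} [Fintype V] [DecidableEq V]
    (G : SimpleGraph V) [DecidableRel G.Adj] (N d : ℕ) (lam : ℝ)
    (hN : Fintype.card V = N) (hreg : G.IsRegularOfDegree d) (hd : 0 < d)
    (hmem : -lam ∈ spectrum ℝ (G.adjMatrix ℝ))
    (hmin : ∀ μ ∈ spectrum ℝ (G.adjMatrix ℝ), -lam ≤ μ) :
    (numStableSets G : ℝ) ≤
      (∑ s ∈ Finset.range (⌈(Real.log (d + 1) / (d + lam)) * N⌉₊ + 1), (N.choose s : ℝ)) *
        2 ^ ((lam / (d + lam)) * N) := by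
  classical
  rcases isEmpty_or_nonempty V with hV | hV
  · have hN0 : N = 0 := by rw [← hN]; exact Fintype.card_eq_zero
    subst hN0
    have h1 : numStableSets G = 1 := by
      rw [numStableSets]
      rw [Nat.card_eq_one_iff_unique]
      constructor
      · infer_instance
      · exact ⟨⟨∅, fun x hx => (Set.notMem_empty x hx).elim⟩⟩
    rw [h1]
    simp only [Nat.cast_zero, mul_zero, Real.rpow_zero, Nat.ceil_zero, zero_add,
      Finset.range_one, Finset.sum_singleton, Nat.choose_self, Nat.cast_one, mul_one]
    norm_num
  · have hNpos : 0 < N := hN ▸ Fintype.card_pos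
    have hlam : 1 ≤ lam := lam_ge_one G d hreg hd lam hmin
    have hd1 : (1:ℝ) ≤ (d:ℝ) := by exact_mod_cast hd
    have hdlam : 0 < (d:ℝ) + lam := by linarith
    have hNr0 : (0:ℝ) < (N:ℝ) := by exact_mod_cast hNpos
    set q : ℝ := ((d:ℝ) + lam) / (N:ℝ) with hqdef
    set mr : ℝ := (lam - 1) * (N:ℝ) / ((d:ℝ) + lam) with hmrdef
    set ρ : ℝ := max (1 - q) 0 with hρdef
    set a : ℝ := lam / ((d:ℝ) + lam) * (N:ℝ) with hadef
    set m : ℕ := ⌊a⌋₊ with hmdef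
    set t : ℕ := ⌈(Real.log ((d:ℝ) + 1) / ((d:ℝ) + lam)) * (N:ℝ)⌉₊ with htdef
    have hq0 : 0 < q := by positivity
    have hamr : a - mr = (N:ℝ) / ((d:ℝ) + lam) := by
      rw [hadef, hmrdef]
      field_simp
      ring
    have ha0 : 0 ≤ a := by positivity
    have hmr_le_a : mr ≤ a := by
      rw [← sub_nonneg, hamr]
      positivity
    have ha : a < (m:ℝ) + 1 := by
      rw [hmdef]
      exact_mod_cast Nat.lt_floor_add_one a
    have hρ0 : 0 ≤ ρ := le_max_right _ _
    have hqmr : q * mr = lam - 1 := by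
      rw [hqdef, hmrdef]
      field_simp
    have hcontr : ∀ c : ℝ, (m:ℝ) + 1 ≤ c → (1 - q) * c + lam - 1 ≤ ρ * (c - mr) + mr := by
      intro c hc
      rcases le_or_gt q 1 with hq1 | hq1
      · have hρ : ρ = 1 - q := max_eq_left (by linarith)
        rw [hρ]
        nlinarith [hqmr]
      · have hρ : ρ = 0 := max_eq_right (by linarith)
        rw [hρ]
        have hcmr : mr ≤ c := by linarith
        nlinarith [mul_nonneg (by linarith : (0:ℝ) ≤ q - 1) (by linarith : (0:ℝ) ≤ c - mr)]
    have hstep : ∀ (C : Finset V) (hne : C.Nonempty),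
        q * C.card - lam ≤ ((C.filter (G.Adj (pickv G C hne))).card : ℝ) := by
      intro C hne
      have := maxdeg_bound G d hreg lam hmin C (pickv G C hne) (pickv_mem G C hne)
        (pickv_max G C hne)
      rw [hN] at this
      calc q * C.card - lam = ((d:ℝ)+lam) * C.card / (N:ℝ) - lam := by
            rw [hqdef]; ring
        _ ≤ _ := this
    have hcarduniv : ((Finset.univ : Finset V).card : ℝ) = (N:ℝ) := by
      rw [Finset.card_univ, hN]
    have hk : ρ ^ t * (((Finset.univ : Finset V).card : ℝ) - mr) ≤ a - mr := by
      have hNmr : (N:ℝ) - mr = (N:ℝ) * ((d:ℝ) + 1) / ((d:ℝ) + lam) := by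
        rw [hmrdef]
        field_simp
        ring
      have hNmr0 : 0 ≤ (N:ℝ) - mr := by rw [hNmr]; positivity
      have hρexp : ρ ≤ Real.exp (-q) :=
        max_le (by linarith [Real.add_one_le_exp (-q)]) (Real.exp_pos _).le
      have h1 : ρ ^ t ≤ Real.exp (-q) ^ t := pow_le_pow_left₀ hρ0 hρexp t
      have h2 : Real.exp (-q) ^ t = Real.exp (-(q * t)) := by
        rw [← Real.exp_nat_mul]
        ring_nf
      have hqt : Real.log ((d:ℝ) + 1) ≤ q * t := by
        have hsig : Real.log ((d:ℝ)+1) = q * ((Real.log ((d:ℝ)+1) / ((d:ℝ)+lam)) * (N:ℝ)) := by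
          rw [hqdef]
          field_simp
        rw [hsig]
        exact mul_le_mul_of_nonneg_left (Nat.le_ceil _) hq0.le
      have h3 : Real.exp (-(q * t)) ≤ ((d:ℝ) + 1)⁻¹ := by
        rw [← Real.exp_log (show (0:ℝ) < ((d:ℝ)+1)⁻¹ by positivity)]
        apply Real.exp_le_exp.mpr
        rw [Real.log_inv]
        linarith
      have h4 : ρ ^ t ≤ ((d:ℝ) + 1)⁻¹ := by
        calc ρ ^ t ≤ Real.exp (-q) ^ t := h1
          _ = Real.exp (-(q * t)) := h2
          _ ≤ ((d:ℝ) + 1)⁻¹ := h3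
      rw [hcarduniv, hamr, hNmr]
      calc ρ ^ t * ((N:ℝ) * ((d:ℝ) + 1) / ((d:ℝ) + lam))
          ≤ ((d:ℝ) + 1)⁻¹ * ((N:ℝ) * ((d:ℝ) + 1) / ((d:ℝ) + lam)) := by
            apply mul_le_mul_of_nonneg_right h4
            positivity
        _ = (N:ℝ) / ((d:ℝ) + lam) := by
            field_simp
    have hJ : ∀ I : Set V, G.IsStableSet I → (runP G m I Finset.univ).1.card ≤ t :=
      fun I _ => runP_fst_card G m q lam mr ρ a hρ0 hcontr hstep ha t Finset.univ I hk
    have hcount := count_main G m t hJ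
    rw [hN] at hcount
    have hcast : (numStableSets G : ℝ)
        ≤ (∑ s ∈ Finset.range (t+1), (N.choose s : ℝ)) * (2:ℝ) ^ (m:ℕ) := by
      have := (Nat.cast_le (α := ℝ)).mpr hcount
      push_cast at this
      exact_mod_cast this
    have hsum0 : 0 ≤ ∑ s ∈ Finset.range (t+1), (N.choose s : ℝ) :=
      Finset.sum_nonneg fun s _ => by positivity
    have hpow : ((2:ℝ) ^ (m:ℕ)) ≤ (2:ℝ) ^ (lam / ((d:ℝ) + lam) * (N:ℝ)) := by
      rw [← Real.rpow_natCast 2 m]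
      apply Real.rpow_le_rpow_of_exponent_le (by norm_num)
      rw [← hadef, hmdef]
      exact Nat.floor_le ha0
    calc (numStableSets G : ℝ)
        ≤ (∑ s ∈ Finset.range (t+1), (N.choose s : ℝ)) * (2:ℝ) ^ (m:ℕ) := hcast
      _ ≤ (∑ s ∈ Finset.range (t+1), (N.choose s : ℝ)) *
            (2:ℝ) ^ (lam / ((d:ℝ) + lam) * (N:ℝ)) := by
          exact mul_le_mul_of_nonneg_left hpow hsum0
      _ = (∑ s ∈ Finset.range (⌈(Real.log (d + 1) / (d + lam)) * N⌉₊ + 1), (N.choose s : ℝ)) *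
            2 ^ ((lam / (d + lam)) * N) := by rw [htdef]
end

section
/- Let M = (E, B) be a matroid of rank r, let X ⊆ E with |X| = r and r_M(X) = r − 1, let C be the unique circuit of M contained in X, and let D be the unique cocircuit of M disjoint from X. Then for every x ∈ X and y ∈ E \ X, the set (X \ {x}) ∪ {y} is a basis of M if and only if x ∈ C and y ∈ D. Equivalently, N(X) ∩ B = {X − x + y : x ∈ C, y ∈ D}, where N(X) = {X − x + y : x ∈ X, y ∈ E \ X}. -/
open Filter
open scoped symmDiff

variable {α : Type*}

open Set

namespace MyAux

lemma base_ncard (M : Matroid α) [M.Finite] {B : Set α} (hB : M.IsBase B) :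
    B.ncard = M.rnk := by
  have hset : {k | ∃ B', M.IsBase B' ∧ B'.ncard = k} = {B.ncard} := by
    ext k
    simp only [Set.mem_setOf_eq, Set.mem_singleton_iff]
    constructor
    · rintro ⟨B', hB', rfl⟩; exact hB'.ncard_eq_ncard_of_isBase hB
    · rintro rfl; exact ⟨B, hB, rfl⟩
  rw [Matroid.rnk, hset, csSup_singleton]

lemma basis_ncard (M : Matroid α) [M.Finite] {I X : Set α} (hX : X ⊆ M.E)
    (hI : M.IsBasis I X) : M.rkFun X = I.ncard := by
  have hXfin : X.Finite := M.set_finite X hX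
  have hne : {k | ∃ I', I' ⊆ X ∧ M.Indep I' ∧ I'.ncard = k}.Nonempty :=
    ⟨I.ncard, I, hI.subset, hI.indep, rfl⟩
  rw [Matroid.rkFun]
  apply le_antisymm
  · apply csSup_le hne
    rintro k ⟨J, hJX, hJ, rfl⟩
    obtain ⟨J', hJ', hJJ'⟩ := hJ.subset_isBasis_of_subset hJX hX
    have hcard : J'.ncard = I.ncard := by
      rw [Set.ncard_def, hJ'.encard_eq_encard hI, ← Set.ncard_def]
    have : J.ncard ≤ J'.ncard := Set.ncard_le_ncard hJJ' (hXfin.subset hJ'.subset)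
    omega
  · apply le_csSup
    · refine ⟨X.ncard, ?_⟩
      rintro k ⟨J, hJX, hJ, rfl⟩
      exact Set.ncard_le_ncard hJX hXfin
    · exact ⟨I, hI.subset, hI.indep, rfl⟩

lemma base_of_indep_ncard (M : Matroid α) [M.Finite] {I : Set α} (hI : M.Indep I)
    (h : I.ncard = M.rnk) : M.IsBase I := by
  obtain ⟨B, hB, hIB⟩ := hI.exists_isBase_superset
  have hBfin : B.Finite := M.set_finite B hB.subset_ground
  have : I = B := Set.eq_of_subset_of_ncard_le hIB (by rw [h, base_ncard M hB]) hBfin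
  rwa [this]

lemma exists_circuitSet_subset_aux (M : Matroid α) :
    ∀ n (S : Set α), S.Finite → S.ncard ≤ n → M.Dep S →
      ∃ C ⊆ S, M.IsCircuitSet C := by
  intro n
  induction n with
  | zero =>
    intro S hfin hcard hdep
    have : S = ∅ := (Set.ncard_eq_zero hfin).mp (Nat.le_zero.mp hcard)
    exact absurd (this ▸ M.empty_indep) hdep.not_indep
  | succ n ih =>
    intro S hfin hcard hdep
    by_cases hmin : ∀ T, T ⊂ S → M.Indep T
    · exact ⟨S, subset_rfl, hdep, hmin⟩
    · push_neg at hmin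
      obtain ⟨T, hTS, hTdep⟩ := hmin
      have hT : M.Dep T := ⟨hTdep, hTS.subset.trans hdep.subset_ground⟩
      have hlt : T.ncard < S.ncard := Set.ncard_lt_ncard hTS hfin
      obtain ⟨C, hCT, hC⟩ := ih T (hfin.subset hTS.subset) (by omega) hT
      exact ⟨C, hCT.trans hTS.subset, hC⟩

lemma exists_circuitSet_subset (M : Matroid α) {S : Set α} (hfin : S.Finite)
    (hdep : M.Dep S) : ∃ C ⊆ S, M.IsCircuitSet C :=
  exists_circuitSet_subset_aux M S.ncard S hfin le_rfl hdep

lemma indep_subset_closure_ncard_le (M : Matroid α) [M.Finite] {I J X : Set α}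
    (hX : X ⊆ M.E) (hJ : M.IsBasis J X) (hI : M.Indep I) (hIX : I ⊆ M.closure X) :
    I.ncard ≤ J.ncard := by
  have hJ' : M.IsBasis J (M.closure X) := hJ.isBasis_closure_right
  obtain ⟨I', hI', hII'⟩ := hI.subset_isBasis_of_subset hIX (M.closure_subset_ground X)
  have hcard : I'.ncard = J.ncard := by
    rw [Set.ncard_def, hI'.encard_eq_encard hJ', ← Set.ncard_def]
  have : I.ncard ≤ I'.ncard :=
    Set.ncard_le_ncard hII' (M.set_finite I' hI'.indep.subset_ground)
  omega

end MyAux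

/-- with `C` the unique circuit contained in `X` and `D` the unique cocircuit
disjoint from `X`, the set `X − x + y` is a basis iff `x ∈ C` and `y ∈ D`. -/
theorem bases_in_neighbourhood {α : Type*} (M : Matroid α) [M.Finite] (r : ℕ)
    (hr : M.rnk = r) (X : Set α) (hXE : X ⊆ M.E) (hXcard : X.ncard = r)
    (hrX : M.rkFun X + 1 = r)
    (C : Set α) (hC : M.IsCircuitSet C) (hCX : C ⊆ X)
    (hCuniq : ∀ C' : Set α, M.IsCircuitSet C' → C' ⊆ X → C' = C)
    (D : Set α) (hD : M.IsCocircuitSet D) (hDX : D ∩ X = ∅)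
    (hDuniq : ∀ D' : Set α, M.IsCocircuitSet D' → D' ∩ X = ∅ → D' = D) :
    ∀ x ∈ X, ∀ y ∈ M.E \ X, (M.IsBase (insert y (X \ {x})) ↔ x ∈ C ∧ y ∈ D) := by
  intro x hx y hy
  have hXfin : X.Finite := M.set_finite X hXE
  have hr1 : 1 ≤ r := by omega
  have key : ∀ x' ∈ X, (M.Indep (X \ {x'}) ↔ x' ∈ C) := by
    intro x' hx'
    constructor
    · intro hind
      by_contra hxC
      have hCsub : C ⊆ X \ {x'} := Set.subset_diff_singleton hCX hxC
      exact hC.1.not_indep (hind.subset hCsub)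
    · intro hxC
      by_contra hdep
      have hdep' : M.Dep (X \ {x'}) := ⟨hdep, Set.diff_subset.trans hXE⟩
      obtain ⟨C', hC'sub, hC'⟩ :=
        MyAux.exists_circuitSet_subset M (hXfin.subset Set.diff_subset) hdep'
      have h' := hCuniq C' hC' (hC'sub.trans Set.diff_subset)
      subst h'
      exact (hC'sub hxC).2 rfl
  obtain ⟨J, hJ⟩ := M.exists_isBasis X hXE
  have hJcard : J.ncard = r - 1 := by
    have := MyAux.basis_ncard M hXE hJ; omega
  have hbasis : ∀ x' ∈ C, M.IsBasis (X \ {x'}) X := by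
    intro x' hx'
    have hx'X : x' ∈ X := hCX hx'
    have hind : M.Indep (X \ {x'}) := (key x' hx'X).mpr hx'
    obtain ⟨I, hI, hsub⟩ := hind.subset_isBasis_of_subset Set.diff_subset hXE
    have hIcard : I.ncard = r - 1 := by
      have := MyAux.basis_ncard M hXE hI; omega
    have hdcard : (X \ {x'}).ncard = r - 1 := by
      rw [Set.ncard_diff_singleton_of_mem hx'X, hXcard]
    have heq : X \ {x'} = I :=
      Set.eq_of_subset_of_ncard_le hsub (by omega) (hXfin.subset hI.subset)
    rwa [heq]
  obtain ⟨x₀, hx₀⟩ := hC.1.nonempty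
  have hx₀X : x₀ ∈ X := hCX hx₀
  have hclX : M.closure (X \ {x₀}) = M.closure X := (hbasis x₀ hx₀).closure_eq_closure
  have hbase_of : ∀ z ∈ M.E \ M.closure X, M.IsBase (insert z (X \ {x₀})) := by
    intro z hz
    have hzX : z ∉ X \ {x₀} := fun h => hz.2 (M.subset_closure X hXE h.1)
    have hind : M.Indep (insert z (X \ {x₀})) := by
      rw [((hbasis x₀ hx₀).indep).insert_indep_iff_of_notMem hzX, hclX]
      exact hz
    apply MyAux.base_of_indep_ncard M hind
    rw [Set.ncard_insert_of_notMem hzX (hXfin.subset Set.diff_subset),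
      Set.ncard_diff_singleton_of_mem hx₀X, hXcard, hr]
    omega
  have hD0 : M.E \ M.closure X = D := by
    apply hDuniq
    · constructor
      · rw [Matroid.dual_dep_iff_forall]
        refine ⟨fun B hB => ?_, Set.diff_subset⟩
        rw [Set.nonempty_iff_ne_empty]
        intro hemp
        have hBcl : B ⊆ M.closure X := by
          intro b hb
          by_contra hbcl
          have hmem : b ∈ (M.E \ M.closure X) ∩ B := ⟨⟨hB.subset_ground hb, hbcl⟩, hb⟩
          rw [hemp] at hmem
          exact hmem
        have h1 : B.ncard ≤ J.ncard :=
          MyAux.indep_subset_closure_ncard_le M hXE hJ hB.indep hBcl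
        have h2 : B.ncard = r := by rw [MyAux.base_ncard M hB, hr]
        omega
      · intro S hS
        obtain ⟨z, hzD, hzS⟩ := Set.exists_of_ssubset hS
        rw [Matroid.dual_indep_iff_exists']
        refine ⟨hS.subset.trans Set.diff_subset, insert z (X \ {x₀}), hbase_of z hzD, ?_⟩
        rw [Set.disjoint_left]
        rintro a haS ha
        rcases ha with rfl | haX
        · exact hzS haS
        · exact ((hS.subset haS).2) (M.subset_closure X hXE haX.1)
    · rw [Set.eq_empty_iff_forall_notMem]
      rintro a ⟨ha1, ha2⟩
      exact ha1.2 (M.subset_closure X hXE ha2)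
  constructor
  · intro hB
    have hxC : x ∈ C := (key x hx).mp (hB.indep.subset (Set.subset_insert _ _))
    refine ⟨hxC, ?_⟩
    rw [← hD0]
    refine ⟨hy.1, fun hycl => ?_⟩
    have hclx : M.closure (X \ {x}) = M.closure X := (hbasis x hxC).closure_eq_closure
    have hyX : y ∉ X \ {x} := fun h => hy.2 h.1
    have hdep : M.Dep (insert y (X \ {x})) := by
      rw [((hbasis x hxC).indep).insert_dep_iff]
      exact ⟨hclx ▸ hycl, hyX⟩
    exact hdep.not_indep hB.indep
  · rintro ⟨hxC, hyD⟩
    rw [← hD0] at hyD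
    have hclx : M.closure (X \ {x}) = M.closure X := (hbasis x hxC).closure_eq_closure
    have hyX : y ∉ X \ {x} := fun h => hy.2 h.1
    have hind : M.Indep (insert y (X \ {x})) := by
      rw [((hbasis x hxC).indep).insert_indep_iff_of_notMem hyX, hclx]
      exact hyD
    apply MyAux.base_of_indep_ncard M hind
    rw [Set.ncard_insert_of_notMem hyX (hXfin.subset Set.diff_subset),
      Set.ncard_diff_singleton_of_mem (hCX hxC), hXcard, hr]
    omega
end

section
/- For all integers n ≥ 1 and 0 ≤ r ≤ n, the number of stable sets in the Johnson graph satisfies i(J(n,r)) ≥ 2^{C(n,r)/n}; equivalently, log i(J(n,r)) ≥ (1/n) C(n,r). -/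
open Filter
open scoped symmDiff

variable {α : Type*}

/-- `i(J(n,r)) ≥ 2^{C(n,r)/n}` for `n ≥ 1` and `0 ≤ r ≤ n`. -/
theorem johnson_stableSets_lower (n r : ℕ) (hn : 1 ≤ n) (hr : r ≤ n) :
    (2 : ℝ) ^ ((n.choose r : ℝ) / n) ≤ (numStableSets (johnsonGraph (Fin n) r) : ℝ) := by
    classical
  haveI : NeZero n := ⟨by omega⟩
  set V := {X : Finset (Fin n) // X.card = r} with hV
  let f : V → ZMod n := fun X => ∑ x ∈ X.1, ((x : ℕ) : ZMod n)
  -- fibers of f are stable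
  have hstable : ∀ c : ZMod n,
      (johnsonGraph (Fin n) r).IsStableSet {X : V | f X = c} := by
    intro c X hX Y hY hadj
    have hXY : X.1.card = Y.1.card := by rw [X.2, Y.2]
    have hd : (X.1 \ Y.1).card = (Y.1 \ X.1).card := Finset.card_sdiff_comm hXY
    have hcard : (X.1 ∆ Y.1).card = 2 := hadj
    have hdisj : Disjoint (X.1 \ Y.1) (Y.1 \ X.1) := disjoint_sdiff_sdiff
    have hsum : (X.1 \ Y.1).card + (Y.1 \ X.1).card = 2 := by
      rw [← Finset.card_union_of_disjoint hdisj]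
      exact hcard
    have h1 : (X.1 \ Y.1).card = 1 := by omega
    have h2 : (Y.1 \ X.1).card = 1 := by omega
    obtain ⟨a, ha⟩ := Finset.card_eq_one.mp h1
    obtain ⟨b, hb⟩ := Finset.card_eq_one.mp h2
    have hab : a ≠ b := by
      intro h
      have haX : a ∈ X.1 \ Y.1 := by simp [ha]
      have hbY : b ∈ Y.1 \ X.1 := by simp [hb]
      rw [h] at haX
      exact (Finset.mem_sdiff.mp haX).2 (Finset.mem_sdiff.mp hbY).1
    have hfs : f X = f Y := by rw [hX, hY]
    have e1 : (∑ x ∈ X.1 ∩ Y.1, ((x : ℕ) : ZMod n)) + ∑ x ∈ X.1 \ Y.1, ((x : ℕ) : ZMod n)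
        = f X := Finset.sum_inter_add_sum_sdiff _ _ _
    have e2 : (∑ x ∈ Y.1 ∩ X.1, ((x : ℕ) : ZMod n)) + ∑ x ∈ Y.1 \ X.1, ((x : ℕ) : ZMod n)
        = f Y := Finset.sum_inter_add_sum_sdiff _ _ _
    rw [Finset.inter_comm] at e2
    have : ((a : ℕ) : ZMod n) = ((b : ℕ) : ZMod n) := by
      have := e1.trans (hfs.trans e2.symm)
      rw [ha, hb, Finset.sum_singleton, Finset.sum_singleton] at this
      exact add_left_cancel this
    apply hab
    have hv : ((a : ℕ) : ZMod n).val = ((b : ℕ) : ZMod n).val := by rw [this]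
    rw [ZMod.val_cast_of_lt a.isLt, ZMod.val_cast_of_lt b.isLt] at hv
    exact Fin.ext hv
  -- total count
  have htot : Fintype.card V = n.choose r := by
    show Fintype.card {X : Finset (Fin n) // X.card = r} = n.choose r
    rw [Fintype.card_subtype]; simp
  -- pigeonhole over ZMod n
  obtain ⟨c, -, hc⟩ : ∃ c ∈ (Finset.univ : Finset (ZMod n)), (n.choose r : ℝ) / n ≤
      ((Finset.univ.filter fun X : V => f X = c).card : ℝ) := by
    apply Finset.exists_le_of_sum_le Finset.univ_nonempty
    have hsum : ∑ c : ZMod n, ((Finset.univ.filter fun X : V => f X = c).card : ℝ)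
        = (n.choose r : ℝ) := by
      rw [← Nat.cast_sum]
      congr 1
      rw [← htot, Fintype.card, Finset.card_eq_sum_card_fiberwise (t := Finset.univ)
        (f := f) (fun x _ => Finset.mem_univ _)]
    rw [hsum, Finset.sum_const, Finset.card_univ, ZMod.card, nsmul_eq_mul]
    rw [mul_div_cancel₀]
    · positivity
  set k := (Finset.univ.filter fun X : V => f X = c).card with hk
  -- 2^k ≤ numStableSets
  have hcount : 2 ^ k ≤ numStableSets (johnsonGraph (Fin n) r) := by
    set F := (Finset.univ.filter fun X : V => f X = c) with hF
    have : Nat.card {t : Finset V // t ∈ F.powerset} ≤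
        Nat.card {s : Set V // (johnsonGraph (Fin n) r).IsStableSet s} := by
      apply Nat.card_le_card_of_injective
        (fun t => ⟨(t.1 : Set V), by
          intro x hx y hy
          have hxF : x ∈ F := (Finset.mem_powerset.mp t.2) hx
          have hyF : y ∈ F := (Finset.mem_powerset.mp t.2) hy
          have hxf : f x = c := (Finset.mem_filter.mp hxF).2
          have hyf : f y = c := (Finset.mem_filter.mp hyF).2
          exact hstable c hxf hyf⟩)
      intro s t hst
      have : (s.1 : Set V) = (t.1 : Set V) := congrArg Subtype.val hst
      exact Subtype.ext (Finset.coe_injective this)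
    calc 2 ^ k = Nat.card {t : Finset V // t ∈ F.powerset} := by
          rw [Nat.card_eq_fintype_card, Fintype.card_coe, Finset.card_powerset]
      _ ≤ _ := this
  -- combine
  calc (2:ℝ) ^ ((n.choose r : ℝ) / n) ≤ (2:ℝ) ^ (k : ℝ) := by
        rw [Real.rpow_le_rpow_left_iff (by norm_num)]
        exact hc
    _ = ((2 ^ k : ℕ) : ℝ) := by rw [Real.rpow_natCast]; push_cast; ring
    _ ≤ _ := Nat.cast_le.mpr hcount
end

section
/- For every n ≥ 1, the number s_n of sparse paving matroids on the ground set {1,...,n} satisfies s_n ≥ 2^{C(n,⌊n/2⌋)/n}; equivalently, log s_n ≥ (1/n) C(n, ⌊n/2⌋). -/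
open Filter
open scoped symmDiff

variable {α : Type*}

open Finset in
/-- symmDiff of two inserts -/
lemma insert_symmDiff_insert {α : Type*} [DecidableEq α] {t : Finset α} {e1 e2 : α}
    (h1 : e1 ∉ t) (h2 : e2 ∉ t) (hne : e1 ≠ e2) :
    (insert e1 t) ∆ (insert e2 t) = {e1, e2} := by
  ext x
  simp only [Finset.mem_symmDiff, Finset.mem_insert, Finset.mem_singleton, Finset.mem_sdiff] at *
  constructor
  · rintro (⟨h, h'⟩ | ⟨h, h'⟩) <;> tauto
  · rintro (rfl | rfl) <;> [exact Or.inl ⟨Or.inl rfl, by tauto⟩; exact Or.inr ⟨Or.inl rfl, by tauto⟩]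

section SP
variable {n r : ℕ} {A : Finset (Finset (Fin n))}

/-- Not both of two adjacent sets are in a stable family -/
lemma stable_pair (hA1 : ∀ X ∈ A, X.card = r)
    (hA2 : ∀ X ∈ A, ∀ Y ∈ A, X ≠ Y → (X ∆ Y).card ≠ 2)
    {t u : Finset (Fin n)} (htu : t ⊆ u) (htc : t.card + 1 = r) (hu : r < u.card) :
    ∃ s, t ⊆ s ∧ s ⊆ u ∧ s.card = r ∧ s ∉ A := by
  have hcards : 1 < (u \ t).card := by
    rw [Finset.card_sdiff_of_subset htu]; omega
  obtain ⟨e1, he1, e2, he2, hne⟩ := Finset.one_lt_card.mp hcards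
  rw [Finset.mem_sdiff] at he1 he2
  have hc1 : (insert e1 t).card = r := by rw [Finset.card_insert_of_notMem he1.2]; omega
  have hc2 : (insert e2 t).card = r := by rw [Finset.card_insert_of_notMem he2.2]; omega
  have hsub1 : insert e1 t ⊆ u := Finset.insert_subset he1.1 htu
  have hsub2 : insert e2 t ⊆ u := Finset.insert_subset he2.1 htu
  have hne' : insert e1 t ≠ insert e2 t := by
    intro h
    have : e1 ∈ insert e2 t := h ▸ Finset.mem_insert_self e1 t
    rcases Finset.mem_insert.mp this with h' | h' <;> [exact hne h'; exact he1.2 h']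
  by_cases h1 : insert e1 t ∈ A
  · by_cases h2 : insert e2 t ∈ A
    · exact absurd (by rw [insert_symmDiff_insert he1.2 he2.2 hne]; exact Finset.card_pair hne)
        (hA2 _ h1 _ h2 hne')
    · exact ⟨insert e2 t, Finset.subset_insert _ _, hsub2, hc2, h2⟩
  · exact ⟨insert e1 t, Finset.subset_insert _ _, hsub1, hc1, h1⟩

/-- Extend any small set inside `u` to an `r`-set not in `A`. -/
lemma stable_extend (hA1 : ∀ X ∈ A, X.card = r)
    (hA2 : ∀ X ∈ A, ∀ Y ∈ A, X ≠ Y → (X ∆ Y).card ≠ 2)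
    {s u : Finset (Fin n)} (hsu : s ⊆ u) (hs : s.card < r) (hu : r < u.card) :
    ∃ t, s ⊆ t ∧ t ⊆ u ∧ t.card = r ∧ t ∉ A := by
  obtain ⟨t, hst, htu, htc⟩ := Finset.exists_subsuperset_card_eq hsu (by omega : s.card ≤ r - 1)
    (by omega : r - 1 ≤ u.card)
  obtain ⟨w, htw, hwu, h⟩ := stable_pair hA1 hA2 htu (by omega) hu
  exact ⟨w, hst.trans htw, hwu, h⟩

end SP

section SP2
variable {n r : ℕ} {A : Finset (Finset (Fin n))}

def spIndep (r : ℕ) (A : Finset (Finset (Fin n))) (I : Set (Fin n)) : Prop :=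
  ∃ s : Finset (Fin n), ↑s = I ∧ s.card ≤ r ∧ s ∉ A

lemma spIndep_aug (hA1 : ∀ X ∈ A, X.card = r)
    (hA2 : ∀ X ∈ A, ∀ Y ∈ A, X ≠ Y → (X ∆ Y).card ≠ 2) :
    ∀ ⦃I J⦄, spIndep r A I → spIndep r A J → I.ncard < J.ncard →
      ∃ e ∈ J, e ∉ I ∧ spIndep r A (insert e I) := by
  rintro I J ⟨s, rfl, hsr, hsA⟩ ⟨t, rfl, htr, htA⟩ hlt
  rw [Set.ncard_coe_finset, Set.ncard_coe_finset] at hlt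
  have hts : (t \ s).Nonempty := by
    rw [Finset.sdiff_nonempty]; intro h; exact absurd (Finset.card_le_card h) (by omega)
  by_cases hcase : s.card + 1 < r
  · obtain ⟨e, he⟩ := hts
    rw [Finset.mem_sdiff] at he
    refine ⟨e, he.1, he.2, insert e s, Finset.coe_insert e s, ?_, fun hmem => ?_⟩
    · exact (Finset.card_insert_le e s).trans (by omega)
    · have := hA1 _ hmem
      rw [Finset.card_insert_of_notMem he.2] at this; omega
  · have hs1 : s.card + 1 = r := by omega
    have htc : t.card = r := by omega
    by_cases h1 : (t \ s).card = 1
    · obtain ⟨e, he⟩ := Finset.card_eq_one.mp h1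
      have heMem : e ∈ t \ s := he ▸ Finset.mem_singleton_self e
      rw [Finset.mem_sdiff] at heMem
      have hint : (t ∩ s).card = r - 1 := by
        have := Finset.card_sdiff_add_card_inter t s
        omega
      have hst : s ⊆ t := by
        have h' : t ∩ s = s := Finset.eq_of_subset_of_card_le Finset.inter_subset_right
          (by omega)
        exact Finset.inter_eq_right.mp h'
      have : insert e s = t := by
        refine Finset.eq_of_subset_of_card_le (Finset.insert_subset heMem.1 hst) ?_
        rw [Finset.card_insert_of_notMem heMem.2]; omega
      exact ⟨e, heMem.1, heMem.2, t, by rw [← this]; exact Finset.coe_insert e s, htc.le, htA⟩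
    · have hpos : 0 < (t \ s).card := Finset.card_pos.mpr hts
      have h2 : 1 < (t \ s).card := by omega
      obtain ⟨e1, he1, e2, he2, hne⟩ := Finset.one_lt_card.mp h2
      rw [Finset.mem_sdiff] at he1 he2
      have hc1 : (insert e1 s).card = r := by rw [Finset.card_insert_of_notMem he1.2]; omega
      have hc2 : (insert e2 s).card = r := by rw [Finset.card_insert_of_notMem he2.2]; omega
      have hne' : insert e1 s ≠ insert e2 s := by
        intro h
        have : e1 ∈ insert e2 s := h ▸ Finset.mem_insert_self e1 s
        rcases Finset.mem_insert.mp this with h' | h' <;> [exact hne h'; exact he1.2 h']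
      by_cases hA : insert e1 s ∈ A
      · by_cases hB : insert e2 s ∈ A
        · have hcontra := hA2 _ hA _ hB hne'
          rw [insert_symmDiff_insert he1.2 he2.2 hne] at hcontra
          exact absurd (Finset.card_pair hne) hcontra
        · exact ⟨e2, he2.1, he2.2, insert e2 s, Finset.coe_insert e2 s, hc2.le, hB⟩
      · exact ⟨e1, he1.1, he1.2, insert e1 s, Finset.coe_insert e1 s, hc1.le, hA⟩

/-- The sparse paving matroid associated to a stable family `A`. -/
noncomputable def spM (r : ℕ) (A : Finset (Finset (Fin n)))
    (hA1 : ∀ X ∈ A, X.card = r)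
    (hA2 : ∀ X ∈ A, ∀ Y ∈ A, X ≠ Y → (X ∆ Y).card ≠ 2)
    (hr : 1 ≤ r) : Matroid (Fin n) :=
  (IndepMatroid.ofFinite (Set.finite_univ) (spIndep r A)
    (indep_empty := ⟨∅, by simp, by simp, fun h => by
      have := hA1 _ h; simp at this; omega⟩)
    (indep_subset := by
      classical
      rintro I J ⟨s, rfl, hsr, hsA⟩ hIJ
      refine ⟨s.filter (· ∈ I), ?_, ?_, ?_⟩
      · ext x
        simp only [Finset.coe_filter, Set.mem_setOf_eq, Finset.mem_coe]
        exact ⟨fun h => h.2, fun h => ⟨hIJ h, h⟩⟩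
      · exact le_trans (Finset.card_filter_le _ _) hsr
      · intro hmem
        have hcr := hA1 _ hmem
        have hle := Finset.card_filter_le s (· ∈ I)
        have := Finset.eq_of_subset_of_card_le (Finset.filter_subset (· ∈ I) s) (by omega)
        exact hsA (this ▸ hmem))
    (indep_aug := spIndep_aug hA1 hA2)
    (subset_ground := fun I _ => Set.subset_univ I)).matroid

@[simp] lemma spM_E (hA1) (hA2) (hr) : (spM r A hA1 hA2 hr).E = Set.univ := rfl

@[simp] lemma spM_indep (hA1) (hA2) (hr) {I : Set (Fin n)} :
    (spM r A hA1 hA2 hr).Indep I ↔ spIndep r A I := Iff.rfl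

end SP2

section SP3
variable {n r : ℕ} {A : Finset (Finset (Fin n))}

lemma spM_base (hA1 : ∀ X ∈ A, X.card = r)
    (hA2 : ∀ X ∈ A, ∀ Y ∈ A, X ≠ Y → (X ∆ Y).card ≠ 2)
    (hr : 1 ≤ r) (hrn : r < n) {B : Set (Fin n)} :
    (spM r A hA1 hA2 hr).IsBase B ↔ ∃ s : Finset (Fin n), ↑s = B ∧ s.card = r ∧ s ∉ A := by
  have huniv : r < (Finset.univ : Finset (Fin n)).card := by
    rw [Finset.card_univ, Fintype.card_fin]; exact hrn
  constructor
  · intro hB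
    obtain ⟨s, rfl, hsr, hsA⟩ := (spM_indep hA1 hA2 hr).mp hB.indep
    rcases eq_or_lt_of_le hsr with heq | hlt
    · exact ⟨s, rfl, heq, hsA⟩
    · exfalso
      obtain ⟨t, hst, -, htc, htA⟩ := stable_extend hA1 hA2 (Finset.subset_univ s) hlt huniv
      have hmax := Matroid.isBase_iff_maximal_indep.mp hB
      have hts : (↑t : Set (Fin n)) ⊆ ↑s :=
        hmax.2 ((spM_indep hA1 hA2 hr).mpr ⟨t, rfl, htc.le, htA⟩) (Finset.coe_subset.mpr hst)
      have heq : t = s := Finset.coe_subset.mp hts |>.antisymm hst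
      rw [heq] at htc
      omega
  · rintro ⟨s, rfl, hsc, hsA⟩
    refine Matroid.Indep.isBase_of_maximal ((spM_indep hA1 hA2 hr).mpr ⟨s, rfl, hsc.le, hsA⟩) ?_
    rintro J ⟨t, rfl, htr, htA⟩ hst
    have : s = t := Finset.eq_of_subset_of_card_le (Finset.coe_subset.mp hst) (by omega)
    rw [this]

lemma rnk_eq_of_forall_base {α : Type*} {M : Matroid α} {k : ℕ}
    (h : ∀ B, M.IsBase B → B.ncard = k) : M.rnk = k := by
  obtain ⟨B, hB⟩ := M.exists_isBase
  have hset : {k' | ∃ B, M.IsBase B ∧ B.ncard = k'} = {k} := by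
    ext k'
    simp only [Set.mem_setOf_eq, Set.mem_singleton_iff]
    exact ⟨fun ⟨B', hB', hc⟩ => hc ▸ h B' hB', fun hk => ⟨B, hB, hk ▸ h B hB⟩⟩
  rw [Matroid.rnk, hset, csSup_singleton]

lemma spM_rnk (hA1 : ∀ X ∈ A, X.card = r)
    (hA2 : ∀ X ∈ A, ∀ Y ∈ A, X ≠ Y → (X ∆ Y).card ≠ 2)
    (hr : 1 ≤ r) (hrn : r < n) : (spM r A hA1 hA2 hr).rnk = r := by
  refine rnk_eq_of_forall_base fun B hB => ?_
  obtain ⟨s, rfl, hsc, -⟩ := (spM_base hA1 hA2 hr hrn).mp hB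
  rw [Set.ncard_coe_finset, hsc]

lemma spM_dual_rnk (hA1 : ∀ X ∈ A, X.card = r)
    (hA2 : ∀ X ∈ A, ∀ Y ∈ A, X ≠ Y → (X ∆ Y).card ≠ 2)
    (hr : 1 ≤ r) (hrn : r < n) : (spM r A hA1 hA2 hr)✶.rnk = n - r := by
  refine rnk_eq_of_forall_base fun B hB => ?_
  obtain ⟨hBc, hBE⟩ := Matroid.dual_isBase_iff'.mp hB
  rw [spM_E, ← Set.compl_eq_univ_diff] at hBc
  obtain ⟨s, hs, hsc, -⟩ := (spM_base hA1 hA2 hr hrn).mp hBc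
  have hcompl : Bᶜ.ncard = r := by rw [← hs, Set.ncard_coe_finset, hsc]
  have htotal := Set.ncard_add_ncard_compl B
  rw [hcompl, Nat.card_eq_fintype_card, Fintype.card_fin] at htotal
  omega

lemma spM_paving (hA1 : ∀ X ∈ A, X.card = r)
    (hA2 : ∀ X ∈ A, ∀ Y ∈ A, X ≠ Y → (X ∆ Y).card ≠ 2)
    (hr : 1 ≤ r) (hrn : r < n) : (spM r A hA1 hA2 hr).Paving := by
  intro C hC
  rw [spM_rnk hA1 hA2 hr hrn]
  by_contra hlt
  push_neg at hlt
  refine hC.1.not_indep ((spM_indep hA1 hA2 hr).mpr ?_)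
  refine ⟨C.toFinite.toFinset, C.toFinite.coe_toFinset, ?_, fun hmem => ?_⟩
  · rw [← Set.ncard_eq_toFinset_card C C.toFinite]; omega
  · have := hA1 _ hmem
    rw [← Set.ncard_eq_toFinset_card C C.toFinite] at this
    omega

lemma spM_dual_paving (hA1 : ∀ X ∈ A, X.card = r)
    (hA2 : ∀ X ∈ A, ∀ Y ∈ A, X ≠ Y → (X ∆ Y).card ≠ 2)
    (hr : 1 ≤ r) (hrn : r < n) : (spM r A hA1 hA2 hr)✶.Paving := by
  intro C hC
  rw [spM_dual_rnk hA1 hA2 hr hrn]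
  by_contra hlt
  push_neg at hlt
  refine hC.1.not_indep ?_
  rw [Matroid.dual_indep_iff_exists']
  refine ⟨hC.1.subset_ground, ?_⟩
  set s : Finset (Fin n) := C.toFinite.toFinset with hs
  have hsC : ↑s = C := C.toFinite.coe_toFinset
  have hscard : s.card = C.ncard := (Set.ncard_eq_toFinset_card C C.toFinite).symm
  have hucard : r < sᶜ.card := by
    rw [Finset.card_compl, Fintype.card_fin]
    omega
  obtain ⟨t, -, hts, htc, htA⟩ := stable_extend hA1 hA2 (Finset.empty_subset sᶜ)
    (by rw [Finset.card_empty]; omega) hucard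
  refine ⟨↑t, (spM_base hA1 hA2 hr hrn).mpr ⟨t, rfl, htc, htA⟩, ?_⟩
  rw [← hsC, Set.disjoint_left]
  intro a haC hat
  have ha' : a ∈ sᶜ := hts (by exact_mod_cast hat)
  rw [Finset.mem_compl] at ha'
  exact ha' (by exact_mod_cast haC)

lemma spM_sparsePaving (hA1 : ∀ X ∈ A, X.card = r)
    (hA2 : ∀ X ∈ A, ∀ Y ∈ A, X ≠ Y → (X ∆ Y).card ≠ 2)
    (hr : 1 ≤ r) (hrn : r < n) : (spM r A hA1 hA2 hr).SparsePaving :=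
  ⟨spM_paving hA1 hA2 hr hrn, spM_dual_paving hA1 hA2 hr hrn⟩

lemma spM_mem_iff (hA1 : ∀ X ∈ A, X.card = r)
    (hA2 : ∀ X ∈ A, ∀ Y ∈ A, X ≠ Y → (X ∆ Y).card ≠ 2)
    (hr : 1 ≤ r) {X : Finset (Fin n)} (hX : X.card = r) :
    X ∈ A ↔ ¬ (spM r A hA1 hA2 hr).Indep ↑X := by
  rw [spM_indep]
  constructor
  · rintro hmem ⟨t, ht, htr, htA⟩
    exact htA (Finset.coe_injective ht ▸ hmem)
  · intro h
    by_contra hX'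
    exact h ⟨X, rfl, hX.le, hX'⟩

end SP3


lemma sum_stable {n : ℕ} {X Y : Finset (Fin n)} (hcard : X.card = Y.card)
    (hsum : ∑ x ∈ X, ((x.val : ℕ) : ZMod n) = ∑ x ∈ Y, ((x.val : ℕ) : ZMod n)) :
    (X ∆ Y).card ≠ 2 := by
  intro h2
  have hdisj : Disjoint (X \ Y) (Y \ X) := disjoint_sdiff_sdiff
  have hcs : (X \ Y).card = (Y \ X).card := Finset.card_sdiff_comm hcard
  have hXY : (X ∆ Y).card = (X \ Y).card + (Y \ X).card := by
    rw [symmDiff_def, Finset.sup_eq_union, Finset.card_union_of_disjoint hdisj]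
  have h1 : (X \ Y).card = 1 := by omega
  have h1' : (Y \ X).card = 1 := by omega
  obtain ⟨x, hx⟩ := Finset.card_eq_one.mp h1
  obtain ⟨y, hy⟩ := Finset.card_eq_one.mp h1'
  have hxmem : x ∈ X \ Y := hx ▸ Finset.mem_singleton_self x
  have hymem : y ∈ Y \ X := hy ▸ Finset.mem_singleton_self y
  rw [Finset.mem_sdiff] at hxmem hymem
  have hne : x ≠ y := fun h => hxmem.2 (h ▸ hymem.1)
  have hXsplit : ∑ a ∈ X, ((a.val : ℕ) : ZMod n)
      = ∑ a ∈ X \ Y, ((a.val : ℕ) : ZMod n) + ∑ a ∈ X ∩ Y, ((a.val : ℕ) : ZMod n) :=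
    (Finset.sum_sdiff (Finset.inter_subset_left) |>.symm).trans
      (by rw [Finset.sdiff_inter_self_left])
  have hYsplit : ∑ a ∈ Y, ((a.val : ℕ) : ZMod n)
      = ∑ a ∈ Y \ X, ((a.val : ℕ) : ZMod n) + ∑ a ∈ X ∩ Y, ((a.val : ℕ) : ZMod n) :=
    (Finset.sum_sdiff (Finset.inter_subset_right) |>.symm).trans
      (by rw [Finset.sdiff_inter_self_right, Finset.inter_comm])
  rw [hXsplit, hYsplit, hx, hy, Finset.sum_singleton, Finset.sum_singleton] at hsum
  have hcast : ((x.val : ℕ) : ZMod n) = ((y.val : ℕ) : ZMod n) := by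
    exact add_right_cancel hsum
  have hv := congrArg ZMod.val hcast
  rw [ZMod.val_cast_of_lt x.isLt, ZMod.val_cast_of_lt y.isLt] at hv
  exact hne (Fin.ext hv)

lemma matroid_finite (n : ℕ) : Finite (Matroid (Fin n)) :=
  Finite.of_injective (fun M => (M.E, M.Indep))
    (fun M N h => Matroid.ext_indep (congrArg Prod.fst h)
      (fun I _ => by rw [show M.Indep = N.Indep from congrArg Prod.snd h]))

lemma sp_count {n r : ℕ} (hr : 1 ≤ r) (hrn : r < n) (F : Finset (Finset (Fin n)))
    (hF1 : ∀ X ∈ F, X.card = r)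
    (hF2 : ∀ X ∈ F, ∀ Y ∈ F, X ≠ Y → (X ∆ Y).card ≠ 2) :
    2 ^ F.card ≤ numSparsePaving n := by
  haveI : Finite (Matroid (Fin n)) := matroid_finite n
  have key : ∀ A : {A // A ∈ F.powerset},
      (∀ X ∈ A.1, X.card = r) ∧ (∀ X ∈ A.1, ∀ Y ∈ A.1, X ≠ Y → (X ∆ Y).card ≠ 2) := by
    rintro ⟨A, hA⟩
    rw [Finset.mem_powerset] at hA
    exact ⟨fun X hX => hF1 X (hA hX), fun X hX Y hY => hF2 X (hA hX) Y (hA hY)⟩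
  let g : {A // A ∈ F.powerset} → {M : Matroid (Fin n) // M.E = Set.univ ∧ M.SparsePaving} :=
    fun A => ⟨spM r A.1 (key A).1 (key A).2 hr, rfl, spM_sparsePaving _ _ hr hrn⟩
  have hginj : Function.Injective g := by
    rintro A B h
    simp only [g, Subtype.mk.injEq] at h
    rcases A with ⟨A, hA⟩
    rcases B with ⟨B, hB⟩
    simp only [Subtype.mk.injEq]
    ext X
    constructor
    · intro hX
      have hXr := (key ⟨A, hA⟩).1 X hX
      have hni := (spM_mem_iff (key ⟨A, hA⟩).1 (key ⟨A, hA⟩).2 hr hXr).mp hX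
      rw [h] at hni
      exact (spM_mem_iff (key ⟨B, hB⟩).1 (key ⟨B, hB⟩).2 hr hXr).mpr hni
    · intro hX
      have hXr := (key ⟨B, hB⟩).1 X hX
      have hni := (spM_mem_iff (key ⟨B, hB⟩).1 (key ⟨B, hB⟩).2 hr hXr).mp hX
      rw [← h] at hni
      exact (spM_mem_iff (key ⟨A, hA⟩).1 (key ⟨A, hA⟩).2 hr hXr).mpr hni
  have hle := Nat.card_le_card_of_injective g hginj
  rw [Nat.card_eq_finsetCard, Finset.card_powerset] at hle
  exact hle

lemma freeOn_paving {α : Type*} (E : Set α) : (Matroid.freeOn E).Paving := by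
  intro C hC
  exact absurd (Matroid.freeOn_indep hC.1.subset_ground) hC.1.not_indep

lemma loopyOn_paving {α : Type*} (E : Set α) : (Matroid.loopyOn E).Paving := by
  intro C hC
  have h0 : (Matroid.loopyOn E).rnk = 0 :=
    rnk_eq_of_forall_base fun B hB => by
      rw [Matroid.loopyOn_isBase_iff.mp hB, Set.ncard_empty]
  rw [h0]
  exact Nat.zero_le _

/-- `s_n ≥ 2^{C(n,⌊n/2⌋)/n}` for every `n ≥ 1`. -/
theorem sparsePaving_lower (n : ℕ) (hn : 1 ≤ n) :
    (2 : ℝ) ^ ((n.choose (n / 2) : ℝ) / n) ≤ (numSparsePaving n : ℝ) := by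
  haveI : Finite (Matroid (Fin n)) := matroid_finite n
  rcases eq_or_lt_of_le hn with h1 | h2
  · -- n = 1
    subst h1
    have hfree : (Matroid.freeOn (Set.univ : Set (Fin 1))).SparsePaving := by
      constructor
      · exact freeOn_paving _
      · rw [Matroid.freeOn_dual_eq]
        exact loopyOn_paving _
    have hloopy : (Matroid.loopyOn (Set.univ : Set (Fin 1))).SparsePaving := by
      constructor
      · exact loopyOn_paving _
      · rw [Matroid.loopyOn_dual_eq]
        exact freeOn_paving _
    have hne : (Matroid.freeOn (Set.univ : Set (Fin 1))) ≠ Matroid.loopyOn Set.univ := by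
      intro h
      have hI : (Matroid.freeOn (Set.univ : Set (Fin 1))).Indep {0} :=
        Matroid.freeOn_indep (Set.subset_univ _)
      rw [h, Matroid.loopyOn_indep_iff] at hI
      exact Set.singleton_ne_empty 0 hI
    have h2card : 2 ≤ numSparsePaving 1 := by
      rw [numSparsePaving]
      haveI := Fintype.ofFinite {M : Matroid (Fin 1) // M.E = Set.univ ∧ M.SparsePaving}
      rw [Nat.card_eq_fintype_card]
      refine Fintype.one_lt_card_iff_nontrivial.mpr ⟨⟨Matroid.freeOn Set.univ, rfl, hfree⟩,
        ⟨Matroid.loopyOn Set.univ, rfl, hloopy⟩, ?_⟩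
      simp only [ne_eq, Subtype.mk.injEq]
      exact hne
    rw [show (((1:ℕ).choose (1 / 2) : ℝ) / ((1:ℕ):ℝ)) = 1 by norm_num, Real.rpow_one]
    exact_mod_cast h2card
  · -- 2 ≤ n
    set r := n / 2 with hrdef
    have hr : 1 ≤ r := by omega
    have hrn : r < n := by omega
    haveI : NeZero n := ⟨by omega⟩
    set s0 := Finset.powersetCard r (Finset.univ : Finset (Fin n)) with hs0
    have hs0card : s0.card = n.choose r := by
      rw [hs0, Finset.card_powersetCard, Finset.card_univ, Fintype.card_fin]
    set f : Finset (Fin n) → ZMod n := fun X => ∑ x ∈ X, ((x.val : ℕ) : ZMod n) with hf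
    obtain ⟨i, -, hi⟩ := Finset.exists_max_image (Finset.univ : Finset (ZMod n))
      (fun j => (s0.filter fun X => f X = j).card) Finset.univ_nonempty
    set F := s0.filter (fun X => f X = i) with hF
    have hFcount : n.choose r ≤ n * F.card := by
      have hsum : s0.card = ∑ j ∈ (Finset.univ : Finset (ZMod n)),
          (s0.filter fun X => f X = j).card :=
        Finset.card_eq_sum_card_fiberwise (fun x _ => Finset.mem_univ _)
      have hbd : ∑ j ∈ (Finset.univ : Finset (ZMod n)), (s0.filter fun X => f X = j).card
          ≤ (Finset.univ : Finset (ZMod n)).card • F.card :=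
        Finset.sum_le_card_nsmul _ _ _ (fun x _ => hi x (Finset.mem_univ x))
      rw [Finset.card_univ, ZMod.card n, smul_eq_mul] at hbd
      omega
    have hF1 : ∀ X ∈ F, X.card = r := by
      intro X hX
      rw [hF, Finset.mem_filter, hs0, Finset.mem_powersetCard] at hX
      exact hX.1.2
    have hF2 : ∀ X ∈ F, ∀ Y ∈ F, X ≠ Y → (X ∆ Y).card ≠ 2 := by
      intro X hX Y hY _
      refine sum_stable (by rw [hF1 X hX, hF1 Y hY]) ?_
      have hfX : f X = i := (Finset.mem_filter.mp hX).2
      have hfY : f Y = i := (Finset.mem_filter.mp hY).2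
      exact hfX.trans hfY.symm
    have hcard2 : 2 ^ F.card ≤ numSparsePaving n := sp_count hr hrn F hF1 hF2
    have hnpos : (0 : ℝ) < n := by positivity
    have h1 : ((n.choose (n / 2) : ℝ)) / n ≤ (F.card : ℝ) := by
      rw [div_le_iff₀ hnpos]
      have : n.choose (n / 2) ≤ F.card * n := by rw [Nat.mul_comm]; exact hFcount
      exact_mod_cast this
    calc (2 : ℝ) ^ ((n.choose (n / 2) : ℝ) / n)
        ≤ (2 : ℝ) ^ (F.card : ℝ) := Real.rpow_le_rpow_of_exponent_le one_le_two h1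
      _ = ((2 ^ F.card : ℕ) : ℝ) := by rw [Real.rpow_natCast]; push_cast; ring
      _ ≤ (numSparsePaving n : ℝ) := Nat.cast_le.mpr hcard2
end

section
/- Let n, r be integers with 1 ≤ r ≤ n/2. Then every stable set in the Johnson graph J(n,r) has cardinality at most C(n,r)/(n−r+1) (the Hoffman bound α_{n,r}·C(n,r) with α_{n,r} = 1/(n−r+1)). -/
open Filter
open scoped symmDiff

variable {α : Type*}

/-- the Hoffman bound: every stable set of `J(n,r)` (`1 ≤ r ≤ n/2`)
has cardinality at most `C(n,r)/(n−r+1)`. -/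
theorem johnson_stable_set_card_le (n r : ℕ) (hr : 1 ≤ r) (hrn : 2 * r ≤ n)
    (S : Set {X : Finset (Fin n) // X.card = r})
    (hS : (johnsonGraph (Fin n) r).IsStableSet S) :
    (S.ncard : ℝ) ≤ (n.choose r : ℝ) / ((n : ℝ) - r + 1) := by
    classical
  -- Each member of S, viewed as an r-set, has r subsets of size r-1,
  -- and these collections are pairwise disjoint over S.
  have hfin : S.Finite := Set.toFinite S
  set F : Finset {X : Finset (Fin n) // X.card = r} := hfin.toFinset with hF
  have hcard : S.ncard = F.card := Set.ncard_eq_toFinset_card S hfin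
  have hdisj : ∀ X ∈ F, ∀ Y ∈ F, X ≠ Y →
      Disjoint (X.1.powersetCard (r-1)) (Y.1.powersetCard (r-1)) := by
    intro X hX Y hY hXY
    rw [Finset.disjoint_left]
    intro A hAX hAY
    rw [Finset.mem_powersetCard] at hAX hAY
    have hXS : X ∈ S := by rwa [hF, Set.Finite.mem_toFinset] at hX
    have hYS : Y ∈ S := by rwa [hF, Set.Finite.mem_toFinset] at hY
    apply hS hXS hYS
    -- show adjacency
    have hAint : A ⊆ X.1 ∩ Y.1 := Finset.subset_inter hAX.1 hAY.1
    have h1 : r - 1 ≤ (X.1 ∩ Y.1).card := by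
      rw [← hAX.2]; exact Finset.card_le_card hAint
    have h2 : (X.1 ∩ Y.1).card ≤ r := (Finset.card_le_card Finset.inter_subset_left).trans_eq X.2
    have hne : (X.1 ∩ Y.1).card ≠ r := by
      intro h
      apply hXY
      have e1 : X.1 ∩ Y.1 = X.1 :=
        Finset.eq_of_subset_of_card_le Finset.inter_subset_left (by rw [X.2, h])
      have e2 : X.1 ∩ Y.1 = Y.1 :=
        Finset.eq_of_subset_of_card_le Finset.inter_subset_right (by rw [Y.2, h])
      exact Subtype.ext (e1.symm.trans e2)
    have hinter : (X.1 ∩ Y.1).card = r - 1 := by omega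
    show (X.1 ∆ Y.1).card = 2
    have e1 := Finset.card_inter_add_card_sdiff X.1 Y.1
    have e2 := Finset.card_inter_add_card_sdiff Y.1 X.1
    rw [Finset.inter_comm] at e2
    have hsd : (X.1 ∆ Y.1).card = (X.1 \ Y.1).card + (Y.1 \ X.1).card := by
      rw [symmDiff_def]
      exact Finset.card_union_of_disjoint (disjoint_sdiff_sdiff)
    rw [hsd]
    have := X.2; have := Y.2
    omega
  -- double counting
  have hbi : (F.biUnion (fun X => X.1.powersetCard (r-1))).card = F.card * r := by
    rw [Finset.card_biUnion hdisj]
    have : ∀ X ∈ F, (X.1.powersetCard (r-1)).card = r := by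
      intro X _
      rw [Finset.card_powersetCard, X.2]
      obtain ⟨m, rfl⟩ : ∃ m, r = m + 1 := ⟨r - 1, by omega⟩
      simp [Nat.choose_succ_self_right]
    rw [Finset.sum_congr rfl this, Finset.sum_const, smul_eq_mul]
  have hsub : F.biUnion (fun X => X.1.powersetCard (r-1)) ⊆
      (Finset.univ : Finset (Fin n)).powersetCard (r-1) := by
    intro A hA
    rw [Finset.mem_biUnion] at hA
    obtain ⟨X, _, hAX⟩ := hA
    rw [Finset.mem_powersetCard] at hAX ⊢
    exact ⟨Finset.subset_univ A, hAX.2⟩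
  have hmain : F.card * r ≤ n.choose (r-1) := by
    rw [← hbi]
    calc _ ≤ ((Finset.univ : Finset (Fin n)).powersetCard (r-1)).card :=
          Finset.card_le_card hsub
      _ = n.choose (r-1) := by rw [Finset.card_powersetCard, Finset.card_univ, Fintype.card_fin]
  -- binomial identity: choose n r * r = choose n (r-1) * (n - (r-1))
  have hid : n.choose r * r = n.choose (r-1) * (n - (r-1)) := by
    have := Nat.choose_succ_right_eq n (r-1)
    rw [show r - 1 + 1 = r by omega] at this
    exact this
  have hkey : S.ncard * (n - r + 1) ≤ n.choose r := by
    have h1 : S.ncard * (n - r + 1) * r ≤ n.choose r * r := by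
      calc S.ncard * (n - r + 1) * r = S.ncard * r * (n - r + 1) := by ring
        _ ≤ n.choose (r-1) * (n - r + 1) := by
            exact Nat.mul_le_mul_right _ (hcard ▸ hmain)
        _ = n.choose (r-1) * (n - (r-1)) := by
            congr 1; omega
        _ = n.choose r * r := hid.symm
    exact Nat.le_of_mul_le_mul_right h1 hr
  have hrle : r ≤ n := by omega
  have hpos : (0:ℝ) < (n:ℝ) - r + 1 := by
    have : (r:ℝ) ≤ n := Nat.cast_le.mpr hrle
    linarith
  rw [le_div_iff₀ hpos]
  have : ((n:ℝ) - r + 1) = ((n - r + 1 : ℕ) : ℝ) := by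
    push_cast [Nat.cast_sub hrle]
    ring
  rw [this, ← Nat.cast_mul]
  exact_mod_cast hkey
end
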